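/- arXiv:1706.05040 — 7 statements merged into one kernel-verified Lean document; each statement's English description precedes it below -/
import Mathlib

section
/- For nonnegative reals a, b and any positive integer m, (a^{1/2} b^{1/2})^m + (1/2)^m (a^{m/2} - b^{m/2})^2 ≤ 2^{-m} (a + b)^m. -/
lemma core_ineq (x y : ℝ) (hx : 0 ≤ x) (hy : 0 ≤ y) :
    ∀ m : ℕ, 1 ≤ m →
      x ^ (2 * m) + y ^ (2 * m) + ((2:ℝ) ^ m - 2) * (x * y) ^ m ≤ (x ^ 2 + y ^ 2) ^ m := by
  intro m hm
  induction m, hm using Nat.le_induction with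
  | base => ring_nf; nlinarith [sq_nonneg (x - y)]
  | succ m hm IH =>
    have hmul : (x ^ (2 * m) + y ^ (2 * m) + ((2:ℝ) ^ m - 2) * (x * y) ^ m) * (x ^ 2 + y ^ 2)
        ≤ (x ^ 2 + y ^ 2) ^ m * (x ^ 2 + y ^ 2) :=
      mul_le_mul_of_nonneg_right IH (by positivity)
    have h2m : (2:ℝ) ≤ 2 ^ m := by
      calc (2:ℝ) = 2 ^ 1 := by norm_num
      _ ≤ 2 ^ m := pow_le_pow_right₀ (by norm_num) hm
    have hP : (0:ℝ) ≤ (x * y) ^ m := by positivity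
    have e1 : (x ^ 2 + y ^ 2) ^ (m + 1) = (x ^ 2 + y ^ 2) ^ m * (x ^ 2 + y ^ 2) :=
      pow_succ _ _
    have e2 : x ^ (2 * (m + 1)) = x ^ (2 * m) * x ^ 2 := by ring
    have e3 : y ^ (2 * (m + 1)) = y ^ (2 * m) * y ^ 2 := by ring
    have e4 : (x * y) ^ (m + 1) = (x * y) ^ m * (x * y) := pow_succ _ _
    have a1 : x ^ (2 * m) = (x ^ m) ^ 2 := by rw [mul_comm 2 m, pow_mul]
    have a2 : y ^ (2 * m) = (y ^ m) ^ 2 := by rw [mul_comm 2 m, pow_mul]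
    have hxy : (x * y) ^ m = x ^ m * y ^ m := mul_pow x y m
    have e5 : x ^ (2 * m) * y ^ 2 + y ^ (2 * m) * x ^ 2 ≥ 2 * ((x * y) ^ m * (x * y)) := by
      rw [a1, a2, hxy]
      nlinarith [sq_nonneg (x ^ m * y - y ^ m * x)]
    have e6 : ((2:ℝ) ^ m - 2) * (x * y) ^ m * (x ^ 2 + y ^ 2 - 2 * (x * y)) ≥ 0 := by
      apply mul_nonneg (mul_nonneg (by linarith) hP)
      nlinarith [sq_nonneg (x - y)]
    rw [e1, e2, e3, e4, pow_succ (2:ℝ) m]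
    nlinarith [hmul, e5, e6, hP]

theorem young_type_refinement_half (a b : ℝ) (ha : 0 ≤ a) (hb : 0 ≤ b)
    (m : ℕ) (hm : 0 < m) :
    (a ^ ((1 : ℝ) / 2) * b ^ ((1 : ℝ) / 2)) ^ m
        + (1 / 2 : ℝ) ^ m * (a ^ ((m : ℝ) / 2) - b ^ ((m : ℝ) / 2)) ^ 2
      ≤ (1 / 2 : ℝ) ^ m * (a + b) ^ m := by
  set x := a ^ ((1:ℝ)/2) with hxdef
  set y := b ^ ((1:ℝ)/2) with hydef
  have hx : 0 ≤ x := Real.rpow_nonneg ha _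
  have hy : 0 ≤ y := Real.rpow_nonneg hb _
  have hxa : x ^ 2 = a := by
    rw [hxdef, ← Real.rpow_natCast (a ^ ((1:ℝ)/2)) 2, ← Real.rpow_mul ha]
    norm_num
  have hya : y ^ 2 = b := by
    rw [hydef, ← Real.rpow_natCast (b ^ ((1:ℝ)/2)) 2, ← Real.rpow_mul hb]
    norm_num
  have hxm : a ^ ((m:ℝ)/2) = x ^ m := by
    rw [hxdef, ← Real.rpow_natCast (a ^ ((1:ℝ)/2)) m, ← Real.rpow_mul ha]
    ring_nf
  have hym : b ^ ((m:ℝ)/2) = y ^ m := by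
    rw [hydef, ← Real.rpow_natCast (b ^ ((1:ℝ)/2)) m, ← Real.rpow_mul hb]
    ring_nf
  rw [hxm, hym, ← hxa, ← hya]
  have core := core_ineq x y hx hy m hm
  have hhalf : (0:ℝ) ≤ (1/2:ℝ) ^ m := by positivity
  have key := mul_le_mul_of_nonneg_left core hhalf
  have hone : (1/2:ℝ) ^ m * (2:ℝ) ^ m = 1 := by
    rw [← mul_pow]; norm_num
  have hx2m : x ^ (2 * m) = (x ^ m) ^ 2 := by rw [pow_mul, sq, sq]; ring
  have hy2m : y ^ (2 * m) = (y ^ m) ^ 2 := by rw [pow_mul, sq, sq]; ring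
  have hxy : (x * y) ^ m = x ^ m * y ^ m := mul_pow x y m
  nlinarith [key]
end

section
/- For nonnegative reals a, b, exponents p, q > 1 with 1/p + 1/q = 1, r₀ = min(1/p, 1/q), and any positive integer m, one has (a^{1/p} b^{1/q})^m + r₀^m (a^{m/2} - b^{m/2})^2 ≤ (a/p + b/q)^m. -/
open Real

/-- monotonicity of `x ↦ (x+D)^m - x^m` for nonneg reals. -/
lemma aux_pow_mono (G x D : ℝ) (hG : 0 ≤ G) (hGx : G ≤ x) (hD : 0 ≤ D) (m : ℕ) :
    (G + D) ^ m + x ^ m ≤ (x + D) ^ m + G ^ m := by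
  induction m with
  | zero => simp
  | succ n ih =>
    have hx : 0 ≤ x := hG.trans hGx
    have h1 : x ^ n ≤ (x + D) ^ n := pow_le_pow_left₀ hx (by linarith) n
    have h2 : G ^ n ≤ x ^ n := pow_le_pow_left₀ hG hGx n
    have h6 : (G + D) ^ n ≤ (x + D) ^ n + G ^ n - x ^ n := by linarith
    have hGD : (0:ℝ) ≤ G + D := by linarith
    have hstep1 : (G + D) * (G + D) ^ n ≤ (G + D) * ((x + D) ^ n + G ^ n - x ^ n) :=
      mul_le_mul_of_nonneg_left h6 hGD
    have h8a : 0 ≤ (x - G) * ((x + D) ^ n - x ^ n) :=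
      mul_nonneg (by linarith) (by linarith)
    have h8b : 0 ≤ D * (x ^ n - G ^ n) := mul_nonneg hD (by linarith)
    have e1 : (G + D) ^ (n+1) = (G + D) * (G + D) ^ n := by ring
    have e2 : x ^ (n+1) = x * x ^ n := by ring
    have e3 : (x + D) ^ (n+1) = (x + D) * (x + D) ^ n := by ring
    have e4 : G ^ (n+1) = G * G ^ n := by ring
    rw [e1, e2, e3, e4]
    nlinarith [hstep1, h8a, h8b]

/-- (u²+v²)^m ≥ (u^m - v^m)² + (2uv)^m for u,v ≥ 0. -/
lemma aux_claimA (u v : ℝ) (hu : 0 ≤ u) (hv : 0 ≤ v) (m : ℕ) :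
    (u ^ m - v ^ m) ^ 2 + (2 * u * v) ^ m ≤ (u ^ 2 + v ^ 2) ^ m := by
  induction m with
  | zero => norm_num
  | succ n ih =>
    have hs : 0 ≤ u ^ 2 + v ^ 2 := by positivity
    have key : (u ^ (n+1) - v ^ (n+1)) ^ 2 + (2 * u * v) ^ (n+1)
        ≤ (u ^ 2 + v ^ 2) * ((u ^ n - v ^ n) ^ 2 + (2 * u * v) ^ n) := by
      rcases Nat.eq_zero_or_pos n with h | h
      · subst h
        norm_num
        nlinarith [sq_nonneg (u - v)]
      · have h2 : (2:ℝ) ≤ 2 ^ n := by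
          calc (2:ℝ) = 2^1 := by norm_num
          _ ≤ 2^n := pow_le_pow_right₀ (by norm_num) h
        have huv : 0 ≤ u ^ n * v ^ n := by positivity
        have hpos : 0 ≤ ((2:ℝ)^n - 2) * (u^n * v^n) * (u - v)^2 :=
          mul_nonneg (mul_nonneg (by linarith) huv) (sq_nonneg _)
        have h2n : (2 * u * v) ^ n = 2^n * (u^n * v^n) := by
          rw [mul_pow, mul_pow]; ring
        have e1 : u ^ (n+1) = u * u ^ n := by ring
        have e2 : v ^ (n+1) = v * v ^ n := by ring
        have e3 : (2*u*v) ^ (n+1) = (2*u*v) * (2*u*v) ^ n := by ring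
        rw [e1, e2, e3, h2n]
        nlinarith [sq_nonneg (u * v^n - v * u^n), hpos]
    calc (u ^ (n+1) - v ^ (n+1)) ^ 2 + (2 * u * v) ^ (n+1)
        ≤ (u ^ 2 + v ^ 2) * ((u ^ n - v ^ n) ^ 2 + (2 * u * v) ^ n) := key
      _ ≤ (u ^ 2 + v ^ 2) * (u ^ 2 + v ^ 2) ^ n := mul_le_mul_of_nonneg_left ih hs
      _ = (u ^ 2 + v ^ 2) ^ (n+1) := by ring

/-- base refined Young, asymmetric version -/
lemma aux_base' (a b p q : ℝ) (ha : 0 ≤ a) (hb : 0 ≤ b)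
    (hp : 1 < p) (hq : 1 < q) (hpq : 1 / p + 1 / q = 1) (h : 1/p ≤ 1/q) :
    a ^ (1/p) * b ^ (1/q) + (1/p) * (√a - √b)^2 ≤ a / p + b / q := by
  have hp0 : 0 < 1/p := by positivity
  have hq0 : 0 < 1/q := by positivity
  have hab : 0 ≤ √a * √b := by positivity
  have hgm := Real.geom_mean_le_arith_mean2_weighted (w₁ := 1/q - 1/p) (w₂ := 2 * (1/p))
    (p₁ := b) (p₂ := √a * √b) (by linarith) (by positivity) hb hab (by linarith)
  have h1 : (√a * √b) ^ (2*(1/p)) = a ^ (1/p) * b ^ (1/p) := by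
    rw [← Real.sqrt_mul ha, Real.sqrt_eq_rpow, ← Real.rpow_mul (mul_nonneg ha hb),
      show (1/(2:ℝ))*(2*(1/p)) = 1/p by ring, Real.mul_rpow ha hb]
  have h2 : b ^ (1/q - 1/p) * b ^ (1/p) = b ^ (1/q) := by
    rw [← Real.rpow_add' hb (by rw [show (1/q - 1/p) + 1/p = 1/q by ring]; positivity),
      show (1/q - 1/p) + 1/p = 1/q by ring]
  have hval : b ^ (1/q - 1/p) * (√a * √b) ^ (2 * (1/p)) = a ^ (1/p) * b ^ (1/q) := by
    calc b ^ (1/q - 1/p) * (√a * √b) ^ (2 * (1/p))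
        = a ^ (1/p) * (b ^ (1/q - 1/p) * b ^ (1/p)) := by rw [h1]; ring
      _ = a ^ (1/p) * b ^ (1/q) := by rw [h2]
  rw [hval] at hgm
  have hsab : √a ^ 2 = a := Real.sq_sqrt ha
  have hsbb : √b ^ 2 = b := Real.sq_sqrt hb
  have hexp : (√a - √b)^2 = a - 2*(√a*√b) + b := by
    rw [sub_sq, hsab, hsbb]; ring
  have key : a/p + b/q = (1/q - 1/p)*b + 2*(1/p)*(√a*√b) + (1/p)*((√a - √b)^2) := by
    rw [hexp]; field_simp; ring
  linarith [hgm, key]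

lemma aux_base (a b p q : ℝ) (ha : 0 ≤ a) (hb : 0 ≤ b)
    (hp : 1 < p) (hq : 1 < q) (hpq : 1 / p + 1 / q = 1) :
    a ^ (1/p) * b ^ (1/q) + min (1/p) (1/q) * (√a - √b)^2 ≤ a / p + b / q := by
  rcases le_total (1/p) (1/q) with h | h
  · rw [min_eq_left h]; exact aux_base' a b p q ha hb hp hq hpq h
  · rw [min_eq_right h]
    have h0 := aux_base' b a q p hb ha hq hp (by linarith) h
    have e : b ^ (1/q) * a ^ (1/p) + 1/q * (√b - √a)^2
        = a ^ (1/p) * b ^ (1/q) + 1/q * (√a - √b)^2 := by ring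
    rw [e] at h0
    linarith

theorem young_refinement_pq (a b p q : ℝ) (ha : 0 ≤ a) (hb : 0 ≤ b)
    (hp : 1 < p) (hq : 1 < q) (hpq : 1 / p + 1 / q = 1) (m : ℕ) (hm : 0 < m) :
    (a ^ (1 / p) * b ^ (1 / q)) ^ m
        + (min (1 / p) (1 / q)) ^ m * (a ^ ((m : ℝ) / 2) - b ^ ((m : ℝ) / 2)) ^ 2
      ≤ (a / p + b / q) ^ m := by
  -- rewrite rpow halves into sqrt powers
  have ham : a ^ ((m : ℝ) / 2) = (√a) ^ m := by
    rw [show ((m:ℝ)/2) = (1/2)*(m:ℝ) by ring, Real.rpow_mul ha, Real.rpow_natCast,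
      ← Real.sqrt_eq_rpow]
  have hbm : b ^ ((m : ℝ) / 2) = (√b) ^ m := by
    rw [show ((m:ℝ)/2) = (1/2)*(m:ℝ) by ring, Real.rpow_mul hb, Real.rpow_natCast,
      ← Real.sqrt_eq_rpow]
  rw [ham, hbm]
  set u := √a with hu
  set v := √b with hv
  have hu0 : 0 ≤ u := Real.sqrt_nonneg a
  have hv0 : 0 ≤ v := Real.sqrt_nonneg b
  have hua : u ^ 2 = a := Real.sq_sqrt ha
  have hvb : v ^ 2 = b := Real.sq_sqrt hb
  set r := min (1/p) (1/q) with hr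
  have hr0 : 0 < r := lt_min (by positivity) (by positivity)
  have hrp : r ≤ 1/p := min_le_left _ _
  have hrq : r ≤ 1/q := min_le_right _ _
  set x := a ^ (1/p) * b ^ (1/q) with hx
  have hx0 : 0 ≤ x := by positivity
  set A := a / p + b / q with hA
  set P := r * (a + b) with hP
  set G := r * (2 * u * v) with hG
  have hG0 : 0 ≤ G := by positivity
  have hGP : G ≤ P := by
    have h2uv : 2 * u * v ≤ a + b := by nlinarith [sq_nonneg (u - v)]
    exact mul_le_mul_of_nonneg_left h2uv hr0.le
  have hP0 : 0 ≤ P := hG0.trans hGP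
  have hPA : P ≤ A := by
    have h1 : r * a ≤ a / p := by
      rw [div_eq_mul_inv, mul_comm a]
      exact mul_le_mul_of_nonneg_right (by simpa using hrp) ha
    have h2 : r * b ≤ b / q := by
      rw [div_eq_mul_inv, mul_comm b]
      exact mul_le_mul_of_nonneg_right (by simpa using hrq) hb
    rw [hP, hA]; linarith
  have hbase : x + (P - G) ≤ A := by
    have hb0 := aux_base a b p q ha hb hp hq hpq
    have hPG : P - G = r * (u - v)^2 := by
      rw [hP, hG, ← hua, ← hvb]; ring
    rw [hPG]
    exact hb0
  have hPG0 : 0 ≤ P - G := by linarith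
  have hclaim : r ^ m * (u ^ m - v ^ m) ^ 2 + G ^ m ≤ P ^ m := by
    have h := aux_claimA u v hu0 hv0 m
    have h1 : P ^ m = r ^ m * (u^2 + v^2) ^ m := by
      rw [hP, ← mul_pow, hua, hvb]
    have h2 : G ^ m = r ^ m * (2*u*v) ^ m := by rw [hG, ← mul_pow]
    have hrm : (0:ℝ) ≤ r ^ m := by positivity
    have h3 := mul_le_mul_of_nonneg_left h hrm
    rw [h1, h2]
    linarith [h3]
  rcases le_total x G with hxG | hGx
  · have hxm : x ^ m ≤ G ^ m := pow_le_pow_left₀ hx0 hxG m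
    have hPm : P ^ m ≤ A ^ m := pow_le_pow_left₀ hP0 hPA m
    linarith
  · have hmono := aux_pow_mono G x (P - G) hG0 hGx hPG0 m
    have hGPG : G + (P - G) = P := by ring
    rw [hGPG] at hmono
    have hAm : (x + (P - G)) ^ m ≤ A ^ m :=
      pow_le_pow_left₀ (by linarith) hbase m
    linarith
end

section
/- Let T be a positive bounded linear operator on a complex Hilbert space H, x ∈ H a unit vector, and 0 < r ≤ 1. Then ⟨T^r x, x⟩ ≤ ⟨Tx, x⟩^r. -/
noncomputable section
open ContinuousLinearMap

/-- The numerical radius of a bounded operator on a complex Hilbert space. -/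
def numRadius {H : Type*} [NormedAddCommGroup H] [InnerProductSpace ℂ H]
    (T : H →L[ℂ] H) : ℝ :=
  sSup {r | ∃ x : H, ‖x‖ = 1 ∧ r = ‖(inner ℂ (T x) x : ℂ)‖}

/-- The block operator `[[A, B], [C, D]]` on the Hilbert space direct sum `H₁ ⊕ H₂`. -/
def blockOp {H₁ H₂ : Type*} [NormedAddCommGroup H₁] [InnerProductSpace ℂ H₁]
    [NormedAddCommGroup H₂] [InnerProductSpace ℂ H₂]
    (A : H₁ →L[ℂ] H₁) (B : H₂ →L[ℂ] H₁) (C : H₁ →L[ℂ] H₂) (D : H₂ →L[ℂ] H₂) :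
    WithLp 2 (H₁ × H₂) →L[ℂ] WithLp 2 (H₁ × H₂) :=
  (((WithLp.prodContinuousLinearEquiv 2 ℂ H₁ H₂).symm :
      (H₁ × H₂) →L[ℂ] WithLp 2 (H₁ × H₂))).comp
    (((A.comp (fst ℂ H₁ H₂) + B.comp (snd ℂ H₁ H₂)).prod
        (C.comp (fst ℂ H₁ H₂) + D.comp (snd ℂ H₁ H₂))).comp
      ((WithLp.prodContinuousLinearEquiv 2 ℂ H₁ H₂ :
        WithLp 2 (H₁ × H₂) →L[ℂ] (H₁ × H₂))))

/-- The absolute value `|B| = (B*B)^{1/2}` of an operator between Hilbert spaces. -/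
def absOp {E F : Type*} [NormedAddCommGroup E] [InnerProductSpace ℂ E] [CompleteSpace E]
    [NormedAddCommGroup F] [InnerProductSpace ℂ F] [CompleteSpace F]
    (B : E →L[ℂ] F) : E →L[ℂ] E :=
  CFC.sqrt ((ContinuousLinearMap.adjoint B).comp B)

variable {H : Type*} [NormedAddCommGroup H] [InnerProductSpace ℂ H] [CompleteSpace H]

theorem mccarthy_le_one (T : H →L[ℂ] H) (hT : 0 ≤ T) (x : H) (hx : ‖x‖ = 1)
    (r : ℝ) (hr0 : 0 < r) (hr1 : r ≤ 1) :
    (inner ℂ ((cfc (fun t : ℝ => t ^ r) T) x) x : ℂ).re ≤ (inner ℂ (T x) x : ℂ).re ^ r := by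
  have hTpos := (ContinuousLinearMap.nonneg_iff_isPositive T).mp hT
  have hTsa : IsSelfAdjoint T := hTpos.isSelfAdjoint
  set a : ℝ := (inner ℂ (T x) x : ℂ).re with ha
  have ha0 : 0 ≤ a := (Complex.le_def.mp (hTpos.inner_nonneg_left x)).1
  have key : ∀ ε : ℝ, 0 < ε →
      (inner ℂ ((cfc (fun t : ℝ => t ^ r) T) x) x : ℂ).re ≤ (a + ε) ^ r := by
    intro ε hε
    set b : ℝ := a + ε with hbdef
    have hb : 0 < b := by positivity
    set c : ℝ := b ^ r * (1 - r) with hc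
    set m : ℝ := r * b ^ (r - 1) with hm
    have hspec : ∀ t ∈ spectrum ℝ T, t ^ r ≤ c + m * t := by
      intro t ht
      have ht0 : 0 ≤ t := spectrum_nonneg_of_nonneg hT ht
      have hs : (-1 : ℝ) ≤ t / b - 1 := by
        have : 0 ≤ t / b := div_nonneg ht0 hb.le
        linarith
      have hber := rpow_one_add_le_one_add_mul_self hs hr0.le hr1
      rw [add_sub_cancel] at hber
      have h1 : (t / b) ^ r ≤ 1 + r * (t / b - 1) := hber
      have h2 : b ^ r * (t / b) ^ r ≤ b ^ r * (1 + r * (t / b - 1)) :=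
        mul_le_mul_of_nonneg_left h1 (Real.rpow_nonneg hb.le r)
      have h3 : b ^ r * (t / b) ^ r = t ^ r := by
        rw [← Real.mul_rpow hb.le (div_nonneg ht0 hb.le), mul_div_cancel₀ _ hb.ne']
      have h4 : b ^ r * (1 + r * (t / b - 1)) = c + m * t := by
        have hbr : b ^ r = b ^ (r - 1) * b := by
          rw [← Real.rpow_add_one hb.ne' (r - 1), sub_add_cancel]
        have hbt : b * (t / b) = t := mul_div_cancel₀ t hb.ne'
        rw [hc, hm]
        linear_combination (r * (t / b)) * hbr + (r * b ^ (r - 1)) * hbt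
      rw [← h3, ← h4]
      exact h2
    have hmono : cfc (fun t : ℝ => t ^ r) T ≤ cfc (fun t : ℝ => c + m * t) T :=
      cfc_mono hspec ((Real.continuous_rpow_const hr0.le).continuousOn) (by fun_prop)
    have hcfc : cfc (fun t : ℝ => c + m * t) T = algebraMap ℝ _ c + m • T := by
      rw [cfc_const_add _ _ _ (by fun_prop)]
      congr 1
      rw [cfc_const_mul _ _ _ (by fun_prop), cfc_id' ℝ T]
    have hineq := ((ContinuousLinearMap.le_def _ _).mp hmono).inner_nonneg_left x
    rw [ContinuousLinearMap.sub_apply, inner_sub_left] at hineq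
    replace hineq := (Complex.le_def.mp hineq).1
    rw [Complex.sub_re, Complex.zero_re, sub_nonneg, hcfc] at hineq
    have hval : (inner ℂ ((algebraMap ℝ (H →L[ℂ] H) c + m • T) x) x : ℂ).re = c + m * a := by
      have h1 : (algebraMap ℝ (H →L[ℂ] H) c) x = (c : ℂ) • x := by
        simp [Algebra.algebraMap_eq_smul_one]
      have h2 : (m • T) x = (m : ℂ) • T x := by
        simp [Complex.coe_smul]
      rw [ContinuousLinearMap.add_apply, h1, h2, inner_add_left, inner_smul_left,
        inner_smul_left, @inner_self_eq_norm_sq_to_K ℂ, hx]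
      simp [Complex.add_re, Complex.mul_re, ha]
    rw [hval] at hineq
    have hfin : c + m * a ≤ b ^ r := by
      have heq : c + m * a = b ^ r - m * ε := by
        have hbr : b ^ (r - 1) * b = b ^ r := by
          rw [← Real.rpow_add_one hb.ne' (r - 1), sub_add_cancel]
        have hab : a = b - ε := by rw [hbdef]; ring
        rw [hc, hm, hab]
        linear_combination r * hbr
      rw [heq]
      have : 0 ≤ m * ε := mul_nonneg (mul_nonneg hr0.le (Real.rpow_nonneg hb.le _)) hε.le
      linarith
    exact hineq.trans hfin
  have htend : Filter.Tendsto (fun ε : ℝ => (a + ε) ^ r) (nhdsWithin 0 (Set.Ioi 0))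
      (nhds (a ^ r)) := by
    have hc : ContinuousAt (fun y : ℝ => y ^ r) a :=
      Real.continuousAt_rpow_const a r (Or.inr hr0.le)
    have : Filter.Tendsto (fun ε : ℝ => a + ε) (nhdsWithin 0 (Set.Ioi 0)) (nhds a) := by
      have h : Filter.Tendsto (fun ε : ℝ => a + ε) (nhds 0) (nhds (a + 0)) :=
        (Continuous.add continuous_const continuous_id).tendsto (0 : ℝ)
      rw [add_zero] at h
      exact h.mono_left nhdsWithin_le_nhds
    exact hc.tendsto.comp this
  exact ge_of_tendsto htend (Filter.eventually_of_mem self_mem_nhdsWithin fun ε hε => key ε hε)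
end
end

section
/- For B ∈ B(H₂, H₁) and C ∈ B(H₁, H₂), the numerical radius of T = [[0, B], [C, 0]] satisfies w(T) = (1/2) · sup over θ ∈ ℝ of ‖e^{iθ} B + e^{−iθ} C*‖. -/
noncomputable section
open ContinuousLinearMap

variable {H₁ H₂ : Type*} [NormedAddCommGroup H₁] [InnerProductSpace ℂ H₁] [CompleteSpace H₁]
  [NormedAddCommGroup H₂] [InnerProductSpace ℂ H₂] [CompleteSpace H₂]

private lemma key_re (B : H₂ →L[ℂ] H₁) (C : H₁ →L[ℂ] H₂) (θ : ℝ) (x₁ : H₁) (x₂ : H₂) :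
    (Complex.exp (-θ * Complex.I) * ((inner ℂ (B x₂) x₁ : ℂ) + inner ℂ (C x₁) x₂)).re
      = ((inner ℂ x₁ ((Complex.exp (θ * Complex.I) • B
          + Complex.exp (-θ * Complex.I) • (ContinuousLinearMap.adjoint C)) x₂) : ℂ)).re := by
  have h1 : (Complex.exp (θ * Complex.I) * (inner ℂ x₁ (B x₂) : ℂ)) =
      (starRingEnd ℂ) (Complex.exp (-θ * Complex.I) * (inner ℂ (B x₂) x₁ : ℂ)) := by
    rw [map_mul, inner_conj_symm, ← Complex.exp_conj]
    congr 1
    simp [Complex.conj_I]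
  simp only [ContinuousLinearMap.add_apply, ContinuousLinearMap.smul_apply, inner_add_right,
    inner_smul_right, ContinuousLinearMap.adjoint_inner_right, mul_add, Complex.add_re]
  rw [h1, Complex.conj_re]

set_option linter.unusedSectionVars false in
private lemma blockOp_inner (B : H₂ →L[ℂ] H₁) (C : H₁ →L[ℂ] H₂) (x : WithLp 2 (H₁ × H₂)) :
    (inner ℂ (blockOp 0 B C 0 x) x : ℂ) = inner ℂ (B x.snd) x.fst + inner ℂ (C x.fst) x.snd := by
  simp [blockOp, WithLp.prod_inner_apply]

set_option maxHeartbeats 2000000 in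
theorem numRadius_offDiag_sup (B : H₂ →L[ℂ] H₁) (C : H₁ →L[ℂ] H₂) :
    numRadius (blockOp 0 B C 0) =
      (1 / 2) * sSup {r : ℝ | ∃ θ : ℝ,
        r = ‖Complex.exp (θ * Complex.I) • B
              + Complex.exp (-θ * Complex.I) • (ContinuousLinearMap.adjoint C)‖} := by
  set T := blockOp 0 B C 0 with hT
  set D : ℝ → (H₂ →L[ℂ] H₁) := fun θ => Complex.exp (θ * Complex.I) • B
      + Complex.exp (-θ * Complex.I) • (ContinuousLinearMap.adjoint C) with hD
  have hTi : ∀ x : WithLp 2 (H₁ × H₂),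
      (inner ℂ (T x) x : ℂ) = inner ℂ (B x.snd) x.fst + inner ℂ (C x.fst) x.snd := blockOp_inner B C
  have key : ∀ (θ : ℝ) (x₁ : H₁) (x₂ : H₂),
      (Complex.exp (-θ * Complex.I) * ((inner ℂ (B x₂) x₁ : ℂ) + inner ℂ (C x₁) x₂)).re
        = ((inner ℂ x₁ (D θ x₂) : ℂ)).re := fun θ x₁ x₂ => key_re B C θ x₁ x₂
  have hexp : ∀ θ : ℝ, ‖Complex.exp (θ * Complex.I)‖ = 1 := fun θ => by
    simpa using Complex.norm_exp_ofReal_mul_I θ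
  have hDb : ∀ θ : ℝ, ‖D θ‖ ≤ ‖B‖ + ‖ContinuousLinearMap.adjoint C‖ := by
    intro θ
    simp only [hD]
    refine (norm_add_le _ _).trans ?_
    rw [norm_smul (Complex.exp (θ * Complex.I)) B,
      norm_smul (Complex.exp (-θ * Complex.I)) (ContinuousLinearMap.adjoint C), hexp θ, one_mul]
    have h2 := hexp (-θ)
    push_cast at h2
    rw [h2, one_mul]
  have hgoal2 : {r : ℝ | ∃ θ : ℝ,
        r = ‖Complex.exp (θ * Complex.I) • B
              + Complex.exp (-θ * Complex.I) • (ContinuousLinearMap.adjoint C)‖}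
      = {r : ℝ | ∃ θ : ℝ, r = ‖D θ‖} := rfl
  rw [hgoal2]
  clear_value T D
  set S₁ : Set ℝ := {r | ∃ x : WithLp 2 (H₁ × H₂), ‖x‖ = 1 ∧ r = ‖(inner ℂ (T x) x : ℂ)‖} with hS₁
  set S₂ : Set ℝ := {r : ℝ | ∃ θ : ℝ, r = ‖D θ‖} with hS₂
  show sSup S₁ = (1/2) * sSup S₂
  clear_value S₁ S₂
  have hbdd₂ : BddAbove S₂ := by
    refine ⟨‖B‖ + ‖ContinuousLinearMap.adjoint C‖, ?_⟩
    intro r hr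
    rw [hS₂] at hr
    obtain ⟨θ, rfl⟩ := hr
    exact hDb θ
  have hbdd₁ : BddAbove S₁ := by
    refine ⟨‖T‖, ?_⟩
    intro r hr
    rw [hS₁] at hr
    obtain ⟨x, hx, rfl⟩ := hr
    calc ‖(inner ℂ (T x) x : ℂ)‖ ≤ ‖T x‖ * ‖x‖ := norm_inner_le_norm _ _
      _ ≤ ‖T‖ * ‖x‖ * ‖x‖ := by gcongr; exact le_opNorm T x
      _ = ‖T‖ := by rw [hx]; ring
  have hw0 : 0 ≤ sSup S₁ := Real.sSup_nonneg (by
    intro r hr; rw [hS₁] at hr; obtain ⟨x, hx, rfl⟩ := hr; positivity)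
  have hM0 : 0 ≤ sSup S₂ := Real.sSup_nonneg (by
    intro r hr; rw [hS₂] at hr; obtain ⟨θ, rfl⟩ := hr; positivity)
  have le1 : sSup S₁ ≤ (1/2) * sSup S₂ := by
    apply Real.sSup_le _ (by positivity)
    intro r hr
    rw [hS₁] at hr
    obtain ⟨x, hx, rfl⟩ := hr
    set z : ℂ := inner ℂ (T x) x with hz
    have hzval : z = inner ℂ (B x.snd) x.fst + inner ℂ (C x.fst) x.snd := hTi x
    have hexpne : Complex.exp ((z.arg : ℂ) * Complex.I) ≠ 0 := Complex.exp_ne_zero _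
    have hmul : Complex.exp (-(z.arg : ℝ) * Complex.I) * z = ((‖z‖ : ℝ) : ℂ) := by
      push_cast
      rw [neg_mul, Complex.exp_neg]
      rw [inv_mul_eq_iff_eq_mul₀ (Complex.exp_ne_zero _), mul_comm]
      exact (Complex.norm_mul_exp_arg_mul_I z).symm
    have habs : ‖z‖ = (Complex.exp (-(z.arg : ℝ) * Complex.I) * z).re := by
      rw [hmul, Complex.ofReal_re]
    have hre : (Complex.exp (-(z.arg : ℝ) * Complex.I) * z).re
        = ((inner ℂ x.fst (D z.arg x.snd) : ℂ)).re := by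
      have h := key z.arg x.fst x.snd
      rw [← hzval] at h
      exact h
    have hnormsq : ‖x.fst‖ ^ 2 + ‖x.snd‖ ^ 2 = 1 := by
      have := WithLp.prod_norm_sq_eq_of_L2 x
      rw [hx] at this; simpa using this.symm
    have hDθ : ‖D z.arg‖ ≤ sSup S₂ := le_csSup hbdd₂ (by rw [hS₂]; exact ⟨z.arg, rfl⟩)
    calc ‖z‖ = (Complex.exp (-(z.arg : ℝ) * Complex.I) * z).re := habs
      _ ≤ ‖(inner ℂ x.fst (D z.arg x.snd) : ℂ)‖ := by
          rw [hre]; exact Complex.re_le_norm _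
      _ ≤ ‖x.fst‖ * (‖D z.arg‖ * ‖x.snd‖) :=
          (norm_inner_le_norm _ _).trans (by gcongr; exact le_opNorm _ _)
      _ ≤ (1/2) * ‖D z.arg‖ := by
          nlinarith [norm_nonneg (D z.arg), norm_nonneg x.fst, norm_nonneg x.snd,
            sq_nonneg (‖x.fst‖ - ‖x.snd‖)]
      _ ≤ (1/2) * sSup S₂ := by linarith
  have le2 : sSup S₂ ≤ 2 * sSup S₁ := by
    apply Real.sSup_le _ (by linarith)
    intro r hr
    rw [hS₂] at hr
    obtain ⟨θ, rfl⟩ := hr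
    refine opNorm_le_bound _ (by linarith) fun y => ?_
    rcases eq_or_ne y 0 with rfl | hy
    · simp
    have hy0 : (0:ℝ) < ‖y‖ := norm_pos_iff.mpr hy
    set x₂ : H₂ := ((‖y‖:ℂ))⁻¹ • y with hx₂
    have hx₂n : ‖x₂‖ = 1 := by
      rw [hx₂, norm_smul]; simp [hy0.ne']
    have hDy : ‖D θ y‖ = ‖y‖ * ‖D θ x₂‖ := by
      rw [hx₂, map_smul, norm_smul]
      simp; field_simp
    clear_value x₂
    rw [hDy, mul_comm (2 * sSup S₁) ‖y‖]
    have main : ‖D θ x₂‖ ≤ 2 * sSup S₁ := by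
      rcases eq_or_ne (D θ x₂) 0 with h0 | h0
      · rw [h0, norm_zero]; linarith
      have hDpos : 0 < ‖D θ x₂‖ := norm_pos_iff.mpr h0
      set u : H₁ := ((‖D θ x₂‖:ℂ))⁻¹ • D θ x₂ with hu
      have hun : ‖u‖ = 1 := by rw [hu, norm_smul]; simp [hDpos.ne']
      have h1 : ((inner ℂ u (D θ x₂) : ℂ)).re = ‖D θ x₂‖ := by
        have huv : (inner ℂ u (D θ x₂) : ℂ) = ((‖D θ x₂‖ : ℂ)) := by
          rw [hu, inner_smul_left, inner_self_eq_norm_sq_to_K, map_inv₀, Complex.conj_ofReal]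
          rw [pow_two]
          field_simp
          rw [pow_two]; exact mul_div_cancel_right₀ _ (by simp [hDpos.ne'])
        rw [huv, Complex.ofReal_re]
      clear_value u
      set a : ℝ := (Real.sqrt 2)⁻¹ with ha
      have ha0 : 0 < a := by positivity
      have ha2 : a ^ 2 = 1/2 := by
        rw [ha, inv_pow, Real.sq_sqrt (by norm_num : (0:ℝ) ≤ 2)]; norm_num
      clear_value a
      set x : WithLp 2 (H₁ × H₂) := (WithLp.equiv 2 (H₁ × H₂)).symm ((a:ℂ) • u, (a:ℂ) • x₂)
        with hx
      have hxf : x.fst = (a:ℂ) • u := rfl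
      have hxs : x.snd = (a:ℂ) • x₂ := rfl
      have hxn : ‖x‖ = 1 := by
        rw [WithLp.prod_norm_eq_of_L2, hxf, hxs, norm_smul, norm_smul, hun, hx₂n]
        rw [Complex.norm_real, Real.norm_eq_abs, abs_of_pos ha0,
          show (a*1:ℝ)^2 + (a*1)^2 = 1 by nlinarith, Real.sqrt_one]
      clear_value x
      set z : ℂ := inner ℂ (B x₂) u + inner ℂ (C u) x₂ with hz
      have hinner : (inner ℂ (T x) x : ℂ) = ((a:ℂ)^2) * z := by
        rw [hTi x, hxf, hxs, map_smul, map_smul]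
        rw [inner_smul_left, inner_smul_right, inner_smul_left, inner_smul_right,
          Complex.conj_ofReal, hz]
        ring
      have hmem : ‖(inner ℂ (T x) x : ℂ)‖ ∈ S₁ := by rw [hS₁]; exact ⟨x, hxn, rfl⟩
      have hle : ‖(inner ℂ (T x) x : ℂ)‖ ≤ sSup S₁ := le_csSup hbdd₁ hmem
      have hnormz : ‖(inner ℂ (T x) x : ℂ)‖ = (1/2) * ‖z‖ := by
        rw [hinner, norm_mul, norm_pow, Complex.norm_real, Real.norm_eq_abs, abs_of_pos ha0, ha2]
      have h2 := key θ u x₂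
      have h3 : (Complex.exp (-θ * Complex.I) * z).re ≤ ‖z‖ := by
        refine (Complex.re_le_norm _).trans ?_
        rw [norm_mul]
        simp [Complex.norm_exp]
      have hDle : ‖D θ x₂‖ ≤ ‖z‖ := by
        rw [← hz] at h2
        calc ‖D θ x₂‖ = (Complex.exp (-θ * Complex.I) * z).re := by rw [h2, h1]
          _ ≤ ‖z‖ := h3
      linarith [hnormz ▸ hle]
    nlinarith [norm_nonneg y]
  linarith
end
end

section
/- For A, B ∈ B(H), the numerical radius of the block operator [[A, B], [B, A]] on H ⊕ H equals max{w(A + B), w(A − B)}. In particular, w([[0, B], [B, 0]]) = w(B). -/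
noncomputable section
set_option linter.unusedSectionVars false
open ContinuousLinearMap

variable {H : Type*} [NormedAddCommGroup H] [InnerProductSpace ℂ H] [CompleteSpace H]

namespace NumRadAux

lemma bdd (T : H →L[ℂ] H) :
    BddAbove {r | ∃ x : H, ‖x‖ = 1 ∧ r = ‖(inner ℂ (T x) x : ℂ)‖} := by
  refine ⟨‖T‖, ?_⟩
  rintro r ⟨x, hx, rfl⟩
  calc ‖(inner ℂ (T x) x : ℂ)‖ ≤ ‖T x‖ * ‖x‖ := norm_inner_le_norm _ _
    _ ≤ ‖T‖ * ‖x‖ * ‖x‖ := by gcongr; exact T.le_opNorm x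
    _ = ‖T‖ := by rw [hx]; ring

lemma nonneg (T : H →L[ℂ] H) : 0 ≤ numRadius T :=
  Real.sSup_nonneg (by rintro r ⟨x, hx, rfl⟩; positivity)

lemma inner_le (T : H →L[ℂ] H) (u : H) :
    ‖(inner ℂ (T u) u : ℂ)‖ ≤ numRadius T * ‖u‖ ^ 2 := by
  rcases eq_or_ne u 0 with rfl | hu
  · simp
  · have hn : (0:ℝ) < ‖u‖ := norm_pos_iff.mpr hu
    set c : ℂ := ((‖u‖⁻¹ : ℝ) : ℂ) with hc
    have hmem : ‖(inner ℂ (T (c • u)) (c • u) : ℂ)‖ ∈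
        {r | ∃ x : H, ‖x‖ = 1 ∧ r = ‖(inner ℂ (T x) x : ℂ)‖} := by
      refine ⟨c • u, ?_, rfl⟩
      rw [norm_smul, hc, Complex.norm_real, Real.norm_eq_abs,
        abs_of_nonneg (by positivity)]
      field_simp
    have h1 : ‖(inner ℂ (T (c • u)) (c • u) : ℂ)‖ ≤ numRadius T := le_csSup (bdd T) hmem
    have h2 : (inner ℂ (T (c • u)) (c • u) : ℂ) = c * c * inner ℂ (T u) u := by
      rw [map_smul, inner_smul_left, inner_smul_right, hc, Complex.conj_ofReal]; ring
    rw [h2, norm_mul, norm_mul, hc, Complex.norm_real, Real.norm_eq_abs,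
      abs_of_nonneg (by positivity)] at h1
    have hne : ‖u‖ ≠ 0 := hn.ne'
    have h3 := mul_le_mul_of_nonneg_left h1 (sq_nonneg ‖u‖)
    calc ‖(inner ℂ (T u) u : ℂ)‖
        = ‖u‖ ^ 2 * (‖u‖⁻¹ * ‖u‖⁻¹ * ‖(inner ℂ (T u) u : ℂ)‖) := by
          field_simp
      _ ≤ ‖u‖ ^ 2 * numRadius T := h3
      _ = numRadius T * ‖u‖ ^ 2 := mul_comm _ _

lemma neg_eq (B : H →L[ℂ] H) : numRadius (-B) = numRadius B := by
  unfold numRadius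
  congr 1
  ext r
  constructor <;> rintro ⟨x, hx, rfl⟩ <;> exact ⟨x, hx, by simp⟩

end NumRadAux

section consts
open NumRadAux

private def crC : ℂ := ((Real.sqrt 2)⁻¹ : ℝ)

private lemma hcc : crC * crC = (2:ℂ)⁻¹ := by
  unfold crC
  rw [← Complex.ofReal_mul, ← mul_inv, Real.mul_self_sqrt (by norm_num)]
  push_cast; ring

private lemma hconj : (starRingEnd ℂ) crC = crC := Complex.conj_ofReal _

private lemma norm_crC : ‖crC‖ = (Real.sqrt 2)⁻¹ := by
  unfold crC
  rw [Complex.norm_real, Real.norm_eq_abs, abs_of_nonneg (by positivity)]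

private lemma pull (T : H →L[ℂ] H) (w : H) :
    (inner ℂ (T (crC • w)) (crC • w) : ℂ) = 2⁻¹ * inner ℂ (T w) w := by
  rw [map_smul, inner_smul_left, inner_smul_right, hconj, ← mul_assoc, hcc]

private lemma norm_crC_smul_sq (w : H) : ‖crC • w‖ ^ 2 = 2⁻¹ * ‖w‖ ^ 2 := by
  rw [norm_smul, norm_crC, mul_pow]
  have : ((Real.sqrt 2)⁻¹) ^ 2 = 2⁻¹ := by
    rw [sq, ← mul_inv, Real.mul_self_sqrt (by norm_num)]
  rw [this]

private lemma expand (A B : H →L[ℂ] H) (x y : H) :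
    (inner ℂ ((A+B) (x+y)) (x+y) : ℂ) + inner ℂ ((A-B) (x-y)) (x-y)
      = 2 * (inner ℂ (A x + B y) x + inner ℂ (B x + A y) y) := by
  simp only [add_apply, sub_apply, map_add, map_sub, inner_add_left, inner_add_right,
    inner_sub_left, inner_sub_right]
  ring

end consts

open NumRadAux in
theorem numRadius_blockSymm (A B : H →L[ℂ] H) :
    numRadius (blockOp A B B A) = max (numRadius (A + B)) (numRadius (A - B)) ∧
      numRadius (blockOp 0 B B 0) = numRadius B := by
  have main : ∀ A B : H →L[ℂ] H,
      numRadius (blockOp A B B A) = max (numRadius (A + B)) (numRadius (A - B)) := by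
    intro A B
    apply le_antisymm
    · -- upper bound
      apply Real.sSup_le
      · rintro r ⟨z, hz, rfl⟩
        set x := z.fst with hxdef
        set y := z.snd with hydef
        have hTz : (inner ℂ ((blockOp A B B A) z) z : ℂ)
            = inner ℂ (A x + B y) x + inner ℂ (B x + A y) y := rfl
        set u : H := crC • (x + y) with hu
        set v : H := crC • (x - y) with hv
        have hid : (inner ℂ ((blockOp A B B A) z) z : ℂ)
            = inner ℂ ((A+B) u) u + inner ℂ ((A-B) v) v := by
          rw [hTz, hu, hv, pull, pull, ← mul_add, expand, ← mul_assoc]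
          norm_num
        have hnorm : ‖u‖ ^ 2 + ‖v‖ ^ 2 = 1 := by
          rw [hu, hv, norm_crC_smul_sq, norm_crC_smul_sq]
          have hpar := parallelogram_law_with_norm ℂ x y
          have hz2 : ‖x‖ ^ 2 + ‖y‖ ^ 2 = 1 := by
            have := WithLp.prod_norm_sq_eq_of_L2 z
            rw [hz] at this; rw [← this]; norm_num
          nlinarith [hpar]
        have h1 : ‖(inner ℂ ((A+B) u) u : ℂ)‖ ≤ numRadius (A+B) * ‖u‖ ^ 2 := inner_le _ _
        have h2 : ‖(inner ℂ ((A-B) v) v : ℂ)‖ ≤ numRadius (A-B) * ‖v‖ ^ 2 := inner_le _ _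
        have hm1 : numRadius (A+B) ≤ max (numRadius (A + B)) (numRadius (A - B)) :=
          le_max_left _ _
        have hm2 : numRadius (A-B) ≤ max (numRadius (A + B)) (numRadius (A - B)) :=
          le_max_right _ _
        calc ‖(inner ℂ ((blockOp A B B A) z) z : ℂ)‖
            ≤ ‖(inner ℂ ((A+B) u) u : ℂ)‖ + ‖(inner ℂ ((A-B) v) v : ℂ)‖ := by
              rw [hid]; exact norm_add_le _ _
          _ ≤ numRadius (A+B) * ‖u‖ ^ 2 + numRadius (A-B) * ‖v‖ ^ 2 := by
              linarith
          _ ≤ max (numRadius (A + B)) (numRadius (A - B)) * ‖u‖ ^ 2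
              + max (numRadius (A + B)) (numRadius (A - B)) * ‖v‖ ^ 2 :=
              add_le_add (mul_le_mul_of_nonneg_right hm1 (sq_nonneg _))
                (mul_le_mul_of_nonneg_right hm2 (sq_nonneg _))
          _ = max (numRadius (A + B)) (numRadius (A - B)) := by
              rw [← mul_add, hnorm, mul_one]
      · exact le_max_of_le_left (nonneg _)
    · -- lower bound
      apply max_le
      · apply Real.sSup_le _ (nonneg _)
        rintro r ⟨w, hw, rfl⟩
        set z : WithLp 2 (H × H) := (WithLp.equiv 2 (H × H)).symm (crC • w, crC • w) with hzdef
        have hz : ‖z‖ = 1 := by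
          have hsq : ‖z‖ ^ 2 = 1 := by
            rw [WithLp.prod_norm_sq_eq_of_L2]
            have : ‖crC • w‖ ^ 2 = 2⁻¹ := by rw [norm_crC_smul_sq, hw]; norm_num
            change ‖crC • w‖ ^ 2 + ‖crC • w‖ ^ 2 = 1
            rw [this]; norm_num
          rw [← Real.sqrt_sq (norm_nonneg z), hsq, Real.sqrt_one]
        have hTz : (inner ℂ ((blockOp A B B A) z) z : ℂ)
            = inner ℂ ((A+B) w) w := by
          have h0 : (inner ℂ ((blockOp A B B A) z) z : ℂ)
              = inner ℂ (A (crC • w) + B (crC • w)) (crC • w)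
                + inner ℂ (B (crC • w) + A (crC • w)) (crC • w) := rfl
          have e1 : A (crC • w) + B (crC • w) = (A + B) (crC • w) := rfl
          have e2 : B (crC • w) + A (crC • w) = (A + B) (crC • w) := by
            rw [add_comm]; rfl
          rw [h0, e1, e2, pull]
          ring
        have : ‖(inner ℂ ((A+B) w) w : ℂ)‖ ∈
            {r | ∃ x : WithLp 2 (H × H), ‖x‖ = 1 ∧
              r = ‖(inner ℂ ((blockOp A B B A) x) x : ℂ)‖} :=
          ⟨z, hz, by rw [hTz]⟩
        exact le_csSup (bdd _) this
      · apply Real.sSup_le _ (nonneg _)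
        rintro r ⟨w, hw, rfl⟩
        set z : WithLp 2 (H × H) :=
          (WithLp.equiv 2 (H × H)).symm (crC • w, -(crC • w)) with hzdef
        have hz : ‖z‖ = 1 := by
          have hsq : ‖z‖ ^ 2 = 1 := by
            rw [WithLp.prod_norm_sq_eq_of_L2]
            have h : ‖crC • w‖ ^ 2 = 2⁻¹ := by rw [norm_crC_smul_sq, hw]; norm_num
            change ‖crC • w‖ ^ 2 + ‖-(crC • w)‖ ^ 2 = 1
            rw [norm_neg, h]; norm_num
          rw [← Real.sqrt_sq (norm_nonneg z), hsq, Real.sqrt_one]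
        have hTz : (inner ℂ ((blockOp A B B A) z) z : ℂ)
            = inner ℂ ((A-B) w) w := by
          have h0 : (inner ℂ ((blockOp A B B A) z) z : ℂ)
              = inner ℂ (A (crC • w) + B (-(crC • w))) (crC • w)
                + inner ℂ (B (crC • w) + A (-(crC • w))) (-(crC • w)) := rfl
          have e1 : A (crC • w) + B (-(crC • w)) = (A - B) (crC • w) := by
            rw [map_neg, sub_apply]; abel
          have e2 : B (crC • w) + A (-(crC • w)) = -((A - B) (crC • w)) := by
            rw [map_neg, sub_apply]; abel
          rw [h0, e1, e2, inner_neg_neg, pull]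
          ring
        have : ‖(inner ℂ ((A-B) w) w : ℂ)‖ ∈
            {r | ∃ x : WithLp 2 (H × H), ‖x‖ = 1 ∧
              r = ‖(inner ℂ ((blockOp A B B A) x) x : ℂ)‖} :=
          ⟨z, hz, by rw [hTz]⟩
        exact le_csSup (bdd _) this
  refine ⟨main A B, ?_⟩
  rw [main 0 B, zero_add, zero_sub, neg_eq, max_self]
end
end

section
/- Let T₁, …, Tₙ with Tᵢ = [[0, Bᵢ], [Cᵢ, 0]] be off-diagonal block operators on H₁ ⊕ H₂, let 0 ≤ α ≤ 1 and p ≥ 2. Then w_p(T₁, …, Tₙ)^p ≤ max{ ‖ Σᵢ (α|Cᵢ|^p + (1−α)|Bᵢ*|^p) ‖, ‖ Σᵢ (α|Bᵢ|^p + (1−α)|Cᵢ*|^p) ‖ }, where w_p(T₁, …, Tₙ) = sup over unit vectors X of (Σᵢ |⟨TᵢX, X⟩|^p)^{1/p}. -/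
noncomputable section
open ContinuousLinearMap

/-- The functional `w_p` of a finite tuple of operators. -/
def wpRad {H : Type*} [NormedAddCommGroup H] [InnerProductSpace ℂ H] {n : ℕ}
    (T : Fin n → (H →L[ℂ] H)) (p : ℝ) : ℝ :=
  sSup {r | ∃ x : H, ‖x‖ = 1 ∧ r = (∑ i, ‖(inner ℂ (T i x) x : ℂ)‖ ^ p) ^ (1 / p)}

set_option maxHeartbeats 2000000
set_option synthInstance.maxHeartbeats 1000000

section Auxiliary

open RCLike

/-! ### Scalar auxiliary lemmas -/

lemma wp_aux_opt_scalar {u K M r : ℝ} (hu : 0 ≤ u) (hK : 0 ≤ K) (hM : 0 ≤ M) (hr : 1 < r)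
    (h : ∀ l : ℝ, 0 < l → u ≤ l ^ (r-1) / r * K + 1 / (l * (r / (r-1))) * M) :
    u ^ r ≤ K * M ^ (r-1) := by
  have hr0 : (0:ℝ) < r := by linarith
  have hr1 : (0:ℝ) < r - 1 := by linarith
  have hr' : (0:ℝ) < r / (r-1) := by positivity
  have hzero : u = 0 → u ^ r ≤ K * M ^ (r-1) := by
    intro hu'
    rw [hu', Real.zero_rpow (by linarith)]
    positivity
  rcases eq_or_lt_of_le hK with hK0 | hKpos
  · apply hzero
    refine le_antisymm ?_ hu
    by_contra hcon
    push_neg at hcon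
    rcases eq_or_lt_of_le hM with hM0 | hMpos
    · have := h 1 one_pos
      rw [← hK0, ← hM0] at this
      simp at this; linarith
    · set l := M / ((r / (r-1)) * (u/2)) with hl
      have hl0 : 0 < l := by positivity
      have h2 := h l hl0
      rw [← hK0] at h2
      have h3 : u ≤ 1 / (l * (r / (r-1))) * M := by simpa using h2
      have heq : 1 / (l * (r / (r-1))) * M = u / 2 := by
        rw [hl]; field_simp
      rw [heq] at h3
      linarith
  · rcases eq_or_lt_of_le hM with hM0 | hMpos
    · apply hzero
      refine le_antisymm ?_ hu
      by_contra hcon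
      push_neg at hcon
      have hx : (0:ℝ) < u / 2 * r / K := by positivity
      set l := (u / 2 * r / K) ^ ((r-1)⁻¹ : ℝ) with hl
      have hl0 : 0 < l := Real.rpow_pos_of_pos hx _
      have h2 := h l hl0
      rw [← hM0] at h2
      have heq : l ^ (r-1) = u / 2 * r / K := by
        rw [hl, ← Real.rpow_mul hx.le, inv_mul_cancel₀ (ne_of_gt hr1), Real.rpow_one]
      rw [heq] at h2
      have h3 : u ≤ u / 2 := by
        have : u / 2 * r / K / r * K = u / 2 := by field_simp
        rw [mul_zero, add_zero, this] at h2
        exact h2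
      linarith
    · set a := K ^ (1/r : ℝ) with ha
      set b := M ^ (1/r : ℝ) with hb
      have ha0 : 0 < a := Real.rpow_pos_of_pos hKpos _
      have hb0 : 0 < b := Real.rpow_pos_of_pos hMpos _
      have haK : a ^ r = K := by
        rw [ha, ← Real.rpow_mul hK, one_div, inv_mul_cancel₀ (ne_of_gt hr0), Real.rpow_one]
      have hbM : b ^ r = M := by
        rw [hb, ← Real.rpow_mul hM, one_div, inv_mul_cancel₀ (ne_of_gt hr0), Real.rpow_one]
      have hA0 : 0 < a ^ (r-1 : ℝ) := Real.rpow_pos_of_pos ha0 _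
      have hB0 : 0 < b ^ (r-1 : ℝ) := Real.rpow_pos_of_pos hb0 _
      have hKa : K = a ^ (r-1 : ℝ) * a := by
        rw [← Real.rpow_add_one (ne_of_gt ha0)]
        rw [sub_add_cancel, haK]
      have hMb : M = b ^ (r-1 : ℝ) * b := by
        rw [← Real.rpow_add_one (ne_of_gt hb0)]
        rw [sub_add_cancel, hbM]
      have key : u ≤ a * b ^ (r-1 : ℝ) := by
        have h2 := h (b / a) (by positivity)
        rw [Real.div_rpow hb0.le ha0.le] at h2
        have e : b ^ (r-1:ℝ) / a ^ (r-1:ℝ) / r * K + 1 / (b / a * (r / (r-1))) * M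
            = a * b ^ (r-1:ℝ) := by
          rw [hKa, hMb]
          field_simp
          ring
        linarith
      calc u ^ r ≤ (a * b ^ (r-1:ℝ)) ^ r := Real.rpow_le_rpow hu key hr0.le
        _ = a ^ r * (b ^ (r-1:ℝ)) ^ r := Real.mul_rpow ha0.le (by positivity)
        _ = K * M ^ (r-1) := by
            rw [haK, ← Real.rpow_mul hb0.le, mul_comm (r-1) r, Real.rpow_mul hb0.le, hbM]

lemma wp_aux_jensen2 {w₁ w₂ z₁ z₂ r : ℝ} (hw₁ : 0 ≤ w₁) (hw₂ : 0 ≤ w₂) (hz₁ : 0 ≤ z₁)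
    (hz₂ : 0 ≤ z₂) (hw : w₁ + w₂ = 1) (hr : 1 ≤ r) :
    (w₁*z₁+w₂*z₂)^r ≤ w₁*z₁^r + w₂*z₂^r := by
  have := Real.rpow_arith_mean_le_arith_mean_rpow Finset.univ ![w₁,w₂] ![z₁,z₂]
    (fun i _ => by fin_cases i <;> simpa)
    (by simpa [Fin.sum_univ_two] using hw) (fun i _ => by fin_cases i <;> simpa) hr
  simpa [Fin.sum_univ_two] using this

lemma wp_aux_hoelder2 {u v K₁ K₂ c d r : ℝ} (hu : 0 ≤ u) (hv : 0 ≤ v) (hK₁ : 0 ≤ K₁)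
    (hK₂ : 0 ≤ K₂) (hc : 0 ≤ c) (hd : 0 ≤ d) (hcd : c + d = 1) (hr : 1 ≤ r)
    (h₁ : u ^ r ≤ K₁ * c ^ (r-1)) (h₂ : v ^ r ≤ K₂ * d ^ (r-1)) :
    (u + v) ^ r ≤ K₁ + K₂ := by
  rcases eq_or_lt_of_le hr with hr1 | hr1
  · rw [← hr1] at h₁ h₂ ⊢
    simp only [Real.rpow_one, sub_self, Real.rpow_zero, mul_one] at h₁ h₂ ⊢
    linarith
  have hr0 : (0:ℝ) < r := by linarith
  have hrpos : (0:ℝ) < r - 1 := by linarith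
  have hzero : ∀ {w : ℝ}, 0 ≤ w → w ^ r ≤ 0 → w = 0 := by
    intro w hw hw0
    by_contra hcon
    have hwpos : 0 < w := lt_of_le_of_ne hw (Ne.symm hcon)
    exact absurd hw0 (not_le.2 (Real.rpow_pos_of_pos hwpos r))
  rcases eq_or_lt_of_le hc with hc0 | hcpos
  · have hd1 : d = 1 := by linarith
    have hu0 : u = 0 := by
      apply hzero hu
      rw [← hc0, Real.zero_rpow (ne_of_gt hrpos), mul_zero] at h₁
      exact h₁
    rw [hu0, zero_add]
    rw [hd1, Real.one_rpow, mul_one] at h₂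
    linarith
  rcases eq_or_lt_of_le hd with hd0 | hdpos
  · have hc1 : c = 1 := by linarith
    have hv0 : v = 0 := by
      apply hzero hv
      rw [← hd0, Real.zero_rpow (ne_of_gt hrpos), mul_zero] at h₂
      exact h₂
    rw [hv0, add_zero]
    rw [hc1, Real.one_rpow, mul_one] at h₁
    linarith
  · have hcr : (0:ℝ) < c ^ (r-1 : ℝ) := Real.rpow_pos_of_pos hcpos _
    have hdr : (0:ℝ) < d ^ (r-1 : ℝ) := Real.rpow_pos_of_pos hdpos _
    have e : u + v = c * (u/c) + d * (v/d) := by field_simp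
    rw [e]
    refine le_trans (wp_aux_jensen2 hc hd (by positivity) (by positivity) hcd hr) ?_
    have hcrr : c ^ r = c ^ (r-1:ℝ) * c := by
      rw [← Real.rpow_add_one (ne_of_gt hcpos), sub_add_cancel]
    have hdrr : d ^ r = d ^ (r-1:ℝ) * d := by
      rw [← Real.rpow_add_one (ne_of_gt hdpos), sub_add_cancel]
    have t₁ : c * (u/c) ^ r ≤ K₁ := by
      rw [Real.div_rpow hu hc, hcrr]
      calc c * (u ^ r / (c ^ (r-1:ℝ) * c)) = u ^ r / c ^ (r-1:ℝ) := by
            field_simp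
            try ring
        _ ≤ K₁ := by
            rw [div_le_iff₀ hcr]
            exact h₁
    have t₂ : d * (v/d) ^ r ≤ K₂ := by
      rw [Real.div_rpow hv hd, hdrr]
      calc d * (v ^ r / (d ^ (r-1:ℝ) * d)) = v ^ r / d ^ (r-1:ℝ) := by
            field_simp
            try ring
        _ ≤ K₂ := by
            rw [div_le_iff₀ hdr]
            exact h₂
    linarith

lemma wp_aux_continuous_rpow_const {r : ℝ} (hr : 0 < r) :
    Continuous (fun t : ℝ => t ^ r) :=
  continuous_iff_continuousAt.2 fun x => Real.continuousAt_rpow_const x r (Or.inr hr.le)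

/-! ### Operator auxiliary lemmas -/

section OneSpace

variable {H : Type*} [NormedAddCommGroup H] [InnerProductSpace ℂ H] [CompleteSpace H]

local notation "⟪" x ", " y "⟫" => @inner ℂ _ _ x y

lemma wp_aux_re_inner_nonneg {T : H →L[ℂ] H} (hT : 0 ≤ T) (x : H) :
    0 ≤ re ⟪T x, x⟫ :=
  ((ContinuousLinearMap.nonneg_iff_isPositive T).mp hT).re_inner_nonneg_left x

lemma wp_aux_inner_re_mono {T S : H →L[ℂ] H} (h : T ≤ S) (x : H) :
    re ⟪T x, x⟫ ≤ re ⟪S x, x⟫ := by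
  have h' : (S - T).IsPositive := (ContinuousLinearMap.le_def T S).mp h
  have h2 := h'.re_inner_nonneg_left x
  simp only [ContinuousLinearMap.sub_apply, inner_sub_left, map_sub] at h2
  linarith

lemma wp_aux_cfc_rpow_nonneg {A : H →L[ℂ] H} (hA : 0 ≤ A) (r : ℝ) :
    0 ≤ cfc (fun t : ℝ => t ^ r) A :=
  cfc_nonneg fun t ht => Real.rpow_nonneg (spectrum_nonneg_of_nonneg hA ht) r

lemma wp_aux_re_inner_le_norm_op (T : H →L[ℂ] H) (x : H) :
    re ⟪T x, x⟫ ≤ ‖T‖ * ‖x‖^2 := by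
  calc re ⟪T x, x⟫ ≤ ‖(⟪T x, x⟫ : ℂ)‖ := RCLike.re_le_norm _
    _ ≤ ‖T x‖ * ‖x‖ := norm_inner_le_norm _ _
    _ ≤ ‖T‖ * ‖x‖ * ‖x‖ := mul_le_mul_of_nonneg_right (T.le_opNorm x) (norm_nonneg x)
    _ = ‖T‖ * ‖x‖^2 := by ring

/-- Hölder–McCarthy inequality. -/
lemma wp_aux_mccarthy (A : H →L[ℂ] H) (hA : 0 ≤ A) {r : ℝ} (hr : 1 ≤ r) (x : H) :
    (re ⟪A x, x⟫) ^ r ≤ re ⟪cfc (fun t : ℝ => t ^ r) A x, x⟫ * (‖x‖ ^ 2 : ℝ) ^ (r - 1) := by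
  have hsa : IsSelfAdjoint A := IsSelfAdjoint.of_nonneg hA
  have hspec : ∀ t ∈ spectrum ℝ A, 0 ≤ t := fun t ht => spectrum_nonneg_of_nonneg hA ht
  rcases eq_or_lt_of_le hr with hr1 | hr1
  · rw [← hr1]
    simp only [sub_self, Real.rpow_one, Real.rpow_zero, mul_one]
    rw [cfc_id' ℝ A]
  · have hr0 : (0:ℝ) < r := by linarith
    have hK : 0 ≤ re ⟪cfc (fun t : ℝ => t ^ r) A x, x⟫ := by
      apply wp_aux_re_inner_nonneg
      exact cfc_nonneg fun t ht => Real.rpow_nonneg (hspec t ht) r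
    apply wp_aux_opt_scalar (wp_aux_re_inner_nonneg hA x) hK (by positivity) hr1
    intro l hl
    have hconj : r.HolderConjugate (r / (r-1)) := Real.HolderConjugate.conjExponent hr1
    have hop : A ≤ (l ^ (r-1) / r) • cfc (fun t : ℝ => t ^ r) A
        + (1 / (l * (r / (r-1)))) • (1 : H →L[ℂ] H) := by
      have e1 : (l ^ (r-1) / r) • cfc (fun t : ℝ => t ^ r) A
          = cfc (fun t : ℝ => (l ^ (r-1) / r) * t ^ r) A := by
        rw [cfc_const_mul _ _ _ ((wp_aux_continuous_rpow_const hr0).continuousOn)]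
      have e2 : (1 / (l * (r / (r-1)))) • (1 : H →L[ℂ] H)
          = cfc (fun _ : ℝ => (1 / (l * (r / (r-1))))) A := by
        rw [cfc_const _ _ hsa, Algebra.algebraMap_eq_smul_one]
      rw [e1, e2, ← cfc_add (a := A) (fun t : ℝ => l ^ (r-1) / r * t ^ r) (fun _ : ℝ => 1 / (l * (r / (r-1))))
        ((continuous_const.mul (wp_aux_continuous_rpow_const hr0)).continuousOn)
        continuousOn_const]
      conv_lhs => rw [← cfc_id ℝ A hsa]
      apply cfc_mono (hf := continuous_id.continuousOn)
        (hg := ((continuous_const.mul (wp_aux_continuous_rpow_const hr0)).add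
          continuous_const).continuousOn)
      intro t ht
      have ht0 : 0 ≤ t := hspec t ht
      have hy := Real.young_inequality_of_nonneg (by positivity : (0:ℝ) ≤ l * t)
        zero_le_one hconj
      rw [mul_one, Real.one_rpow, Real.mul_rpow hl.le ht0] at hy
      have hlr : l ^ r = l ^ (r-1) * l := by
        rw [← Real.rpow_add_one (ne_of_gt hl), sub_add_cancel]
      rw [hlr] at hy
      refine le_of_mul_le_mul_left ?_ hl
      have e : l * (l ^ (r-1) / r * t ^ r + 1 / (l * (r / (r-1))))
          = l ^ (r-1) * l * t ^ r / r + 1 / (r / (r-1)) := by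
        field_simp
      show l * t ≤ l * (l ^ (r-1) / r * t ^ r + 1 / (l * (r / (r-1))))
      rw [e]
      simpa using hy
    have h2 := wp_aux_inner_re_mono hop x
    simp only [ContinuousLinearMap.add_apply, ContinuousLinearMap.smul_apply,
      ContinuousLinearMap.one_apply, inner_add_left, map_add,
      RCLike.real_smul_eq_coe_smul (K := ℂ), inner_smul_left, RCLike.conj_ofReal,
      RCLike.re_ofReal_mul] at h2
    rw [inner_self_eq_norm_sq] at h2
    linarith [h2]

lemma wp_aux_re_inner_sum_combo {n : ℕ} (P Q : Fin n → (H →L[ℂ] H)) (α : ℝ) (x : H) :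
    re ⟪(∑ i, (α • P i + (1-α) • Q i)) x, x⟫
      = ∑ i, (α * re ⟪P i x, x⟫ + (1-α) * re ⟪Q i x, x⟫) := by
  rw [ContinuousLinearMap.sum_apply, sum_inner, map_sum]
  apply Finset.sum_congr rfl
  intro i _
  simp only [ContinuousLinearMap.add_apply, inner_add_left, map_add,
    ContinuousLinearMap.smul_apply, RCLike.real_smul_eq_coe_smul (K := ℂ), inner_smul_left,
    RCLike.conj_ofReal, RCLike.re_ofReal_mul]

end OneSpace

section TwoSpaces

variable {E F : Type*} [NormedAddCommGroup E] [InnerProductSpace ℂ E] [CompleteSpace E]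
  [NormedAddCommGroup F] [InnerProductSpace ℂ F] [CompleteSpace F]

local notation "⟪" x ", " y "⟫" => @inner ℂ _ _ x y

lemma wp_aux_adjoint_comp_self_nonneg (B : E →L[ℂ] F) :
    0 ≤ (ContinuousLinearMap.adjoint B).comp B := by
  rw [ContinuousLinearMap.nonneg_iff_isPositive]
  exact isPositive_adjoint_comp_self B

lemma wp_aux_absOp_eq_cfc_real (B : E →L[ℂ] F) :
    absOp B = cfc (Real.sqrt) ((ContinuousLinearMap.adjoint B).comp B) := by
  have hB := wp_aux_adjoint_comp_self_nonneg B
  rw [absOp, CFC.sqrt_eq_cfc, cfc_nnreal_eq_real _ _ hB]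
  exact cfc_congr fun t ht => by
    rw [Real.coe_sqrt, Real.coe_toNNReal _ (spectrum_nonneg_of_nonneg hB ht)]

lemma wp_aux_cfc_rpow_absOp (B : E →L[ℂ] F) {r : ℝ} (hr : 1 ≤ r) :
    cfc (fun t : ℝ => t ^ r) (absOp B)
      = cfc (fun t : ℝ => t ^ (r / 2)) ((ContinuousLinearMap.adjoint B).comp B) := by
  have hB := wp_aux_adjoint_comp_self_nonneg B
  have hr0 : (0:ℝ) < r := lt_of_lt_of_le one_pos hr
  rw [wp_aux_absOp_eq_cfc_real]
  rw [← cfc_comp (fun t : ℝ => t ^ r) Real.sqrt ((ContinuousLinearMap.adjoint B).comp B)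
    (hg := (wp_aux_continuous_rpow_const hr0).continuousOn)]
  apply cfc_congr
  intro t ht
  have ht' : 0 ≤ t := spectrum_nonneg_of_nonneg hB ht
  simp only [Function.comp]
  rw [Real.sqrt_eq_rpow, ← Real.rpow_mul ht']
  congr 1
  ring

lemma wp_aux_norm_sq_eq_re_inner (T : E →L[ℂ] F) (x : E) :
    (‖T x‖^2 : ℝ) = re ⟪((ContinuousLinearMap.adjoint T).comp T) x, x⟫ := by
  rw [ContinuousLinearMap.comp_apply, ContinuousLinearMap.adjoint_inner_left,
    inner_self_eq_norm_sq]

end TwoSpaces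

section KeyTwo

variable {H₁ H₂ : Type*} [NormedAddCommGroup H₁] [InnerProductSpace ℂ H₁] [CompleteSpace H₁]
  [NormedAddCommGroup H₂] [InnerProductSpace ℂ H₂] [CompleteSpace H₂]

local notation "⟪" x ", " y "⟫" => @inner ℂ _ _ x y

lemma wp_aux_key2 {A₁ : H₁ →L[ℂ] H₁} {A₂ : H₂ →L[ℂ] H₂} (hA₁ : 0 ≤ A₁) (hA₂ : 0 ≤ A₂)
    {r : ℝ} (hr : 1 ≤ r) {x₁ : H₁} {x₂ : H₂} (hx : (‖x₁‖^2 + ‖x₂‖^2 : ℝ) = 1) :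
    (re ⟪A₁ x₁, x₁⟫ + re ⟪A₂ x₂, x₂⟫) ^ r
      ≤ re ⟪cfc (fun t : ℝ => t ^ r) A₁ x₁, x₁⟫ + re ⟪cfc (fun t : ℝ => t ^ r) A₂ x₂, x₂⟫ :=
  wp_aux_hoelder2 (wp_aux_re_inner_nonneg hA₁ x₁) (wp_aux_re_inner_nonneg hA₂ x₂)
    (wp_aux_re_inner_nonneg (wp_aux_cfc_rpow_nonneg hA₁ r) x₁)
    (wp_aux_re_inner_nonneg (wp_aux_cfc_rpow_nonneg hA₂ r) x₂)
    (by positivity) (by positivity) hx hr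
    (wp_aux_mccarthy A₁ hA₁ hr x₁) (wp_aux_mccarthy A₂ hA₂ hr x₂)

end KeyTwo

end Auxiliary

variable {H₁ H₂ : Type*} [NormedAddCommGroup H₁] [InnerProductSpace ℂ H₁] [CompleteSpace H₁]
  [NormedAddCommGroup H₂] [InnerProductSpace ℂ H₂] [CompleteSpace H₂]

set_option maxHeartbeats 4000000 in
theorem wp_offDiag_le {n : ℕ} (B : Fin n → (H₂ →L[ℂ] H₁)) (C : Fin n → (H₁ →L[ℂ] H₂))
    (α p : ℝ) (hα0 : 0 ≤ α) (hα1 : α ≤ 1) (hp : 2 ≤ p) :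
    wpRad (fun i => blockOp 0 (B i) (C i) 0) p ^ p ≤
      max ‖∑ i, (α • cfc (fun t : ℝ => t ^ p) (absOp (C i))
            + (1 - α) • cfc (fun t : ℝ => t ^ p) (absOp (ContinuousLinearMap.adjoint (B i))))‖
          ‖∑ i, (α • cfc (fun t : ℝ => t ^ p) (absOp (B i))
            + (1 - α) • cfc (fun t : ℝ => t ^ p) (absOp (ContinuousLinearMap.adjoint (C i))))‖ := by
  classical
  set R₁ := ∑ i, (α • cfc (fun t : ℝ => t ^ p) (absOp (C i))
      + (1 - α) • cfc (fun t : ℝ => t ^ p) (absOp (ContinuousLinearMap.adjoint (B i)))) with hR₁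
  set R₂ := ∑ i, (α • cfc (fun t : ℝ => t ^ p) (absOp (B i))
      + (1 - α) • cfc (fun t : ℝ => t ^ p) (absOp (ContinuousLinearMap.adjoint (C i)))) with hR₂
  set M := max ‖R₁‖ ‖R₂‖ with hM
  have hM0 : (0:ℝ) ≤ M := le_trans (norm_nonneg _) (le_max_left _ _)
  have hp0 : (0:ℝ) < p := by linarith
  have hp1 : (1:ℝ) ≤ p/2 := by linarith
  have hα1' : (0:ℝ) ≤ 1 - α := by linarith
  have hp1' : (1:ℝ) ≤ p := by linarith
  -- main pointwise bound
  have hmain : ∀ x : WithLp 2 (H₁ × H₂), ‖x‖ = 1 →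
      (∑ i, ‖(inner ℂ ((blockOp 0 (B i) (C i) 0) x) x : ℂ)‖ ^ p) ≤ M := by
    intro x hx
    have hc : (‖x.fst‖^2 + ‖x.snd‖^2 : ℝ) = 1 := by
      rw [← WithLp.prod_norm_sq_eq_of_L2, hx]; norm_num
    have per : ∀ i : Fin n,
        ‖(inner ℂ ((blockOp 0 (B i) (C i) 0) x) x : ℂ)‖ ^ p ≤
          α * (RCLike.re (inner ℂ (cfc (fun t : ℝ => t ^ p) (absOp (C i)) x.fst) x.fst : ℂ)
                + RCLike.re (inner ℂ (cfc (fun t : ℝ => t ^ p) (absOp (B i)) x.snd) x.snd : ℂ))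
          + (1-α) * (RCLike.re (inner ℂ (cfc (fun t : ℝ => t ^ p)
                  (absOp (ContinuousLinearMap.adjoint (B i))) x.fst) x.fst : ℂ)
                + RCLike.re (inner ℂ (cfc (fun t : ℝ => t ^ p)
                  (absOp (ContinuousLinearMap.adjoint (C i))) x.snd) x.snd : ℂ)) := by
      intro i
      have hTx : (inner ℂ ((blockOp 0 (B i) (C i) 0) x) x : ℂ)
          = inner ℂ (B i x.snd) x.fst + inner ℂ (C i x.fst) x.snd := by
        rw [WithLp.prod_inner_apply]
        norm_num [blockOp]
      set a := ‖(inner ℂ (C i x.fst) x.snd : ℂ)‖ with hadef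
      set b := ‖(inner ℂ (B i x.snd) x.fst : ℂ)‖ with hbdef
      have ha0 : 0 ≤ a := norm_nonneg _
      have hb0 : 0 ≤ b := norm_nonneg _
      have hab : ‖(inner ℂ ((blockOp 0 (B i) (C i) 0) x) x : ℂ)‖ ≤ a + b := by
        rw [hTx]
        calc ‖(inner ℂ (B i x.snd) x.fst + inner ℂ (C i x.fst) x.snd : ℂ)‖
            ≤ b + a := norm_add_le _ _
          _ = a + b := by ring
      have hE : (a+b)^2 ≤ ‖C i x.fst‖^2 + ‖B i x.snd‖^2 := by
        have h1 : a ≤ ‖C i x.fst‖ * ‖x.snd‖ := norm_inner_le_norm _ _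
        have h2 : b ≤ ‖B i x.snd‖ * ‖x.fst‖ := norm_inner_le_norm _ _
        nlinarith [norm_nonneg (C i x.fst), norm_nonneg (B i x.snd), norm_nonneg x.fst,
          norm_nonneg x.snd, sq_nonneg (‖C i x.fst‖ * ‖x.fst‖ - ‖B i x.snd‖ * ‖x.snd‖), hc]
      have hE' : (a+b)^2 ≤ ‖ContinuousLinearMap.adjoint (B i) x.fst‖^2
          + ‖ContinuousLinearMap.adjoint (C i) x.snd‖^2 := by
        have e1 : (inner ℂ (C i x.fst) x.snd : ℂ)
            = inner ℂ x.fst (ContinuousLinearMap.adjoint (C i) x.snd) :=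
          (ContinuousLinearMap.adjoint_inner_right _ _ _).symm
        have e2 : (inner ℂ (B i x.snd) x.fst : ℂ)
            = inner ℂ x.snd (ContinuousLinearMap.adjoint (B i) x.fst) :=
          (ContinuousLinearMap.adjoint_inner_right _ _ _).symm
        have h1 : a ≤ ‖x.fst‖ * ‖ContinuousLinearMap.adjoint (C i) x.snd‖ := by
          rw [hadef, e1]; exact norm_inner_le_norm _ _
        have h2 : b ≤ ‖x.snd‖ * ‖ContinuousLinearMap.adjoint (B i) x.fst‖ := by
          rw [hbdef, e2]; exact norm_inner_le_norm _ _
        nlinarith [norm_nonneg (ContinuousLinearMap.adjoint (C i) x.snd),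
          norm_nonneg (ContinuousLinearMap.adjoint (B i) x.fst), norm_nonneg x.fst,
          norm_nonneg x.snd,
          sq_nonneg (‖ContinuousLinearMap.adjoint (B i) x.fst‖ * ‖x.fst‖
            - ‖ContinuousLinearMap.adjoint (C i) x.snd‖ * ‖x.snd‖), hc]
      -- power step
      have hab0 : (0:ℝ) ≤ a + b := by positivity
      have hpow : ‖(inner ℂ ((blockOp 0 (B i) (C i) 0) x) x : ℂ)‖ ^ p ≤ ((a+b)^2 : ℝ) ^ (p/2) := by
        have h1 : ‖(inner ℂ ((blockOp 0 (B i) (C i) 0) x) x : ℂ)‖ ^ p ≤ (a+b) ^ p :=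
          Real.rpow_le_rpow (norm_nonneg _) hab hp0.le
        have h2 : ((a+b):ℝ) ^ p = (((a+b):ℝ)^2) ^ (p/2 : ℝ) := by
          rw [← Real.rpow_natCast (a+b) 2, ← Real.rpow_mul hab0]
          congr 1
          ring
        rw [← h2]
        exact h1
      -- two key bounds
      have k1 : (((a+b):ℝ)^2) ^ (p/2 : ℝ) ≤
          RCLike.re (inner ℂ (cfc (fun t : ℝ => t ^ p) (absOp (C i)) x.fst) x.fst : ℂ)
            + RCLike.re (inner ℂ (cfc (fun t : ℝ => t ^ p) (absOp (B i)) x.snd) x.snd : ℂ) := by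
        have hkey := wp_aux_key2 (wp_aux_adjoint_comp_self_nonneg (C i))
          (wp_aux_adjoint_comp_self_nonneg (B i)) hp1 hc
        rw [← wp_aux_norm_sq_eq_re_inner, ← wp_aux_norm_sq_eq_re_inner] at hkey
        rw [← wp_aux_cfc_rpow_absOp (C i) hp1', ← wp_aux_cfc_rpow_absOp (B i) hp1'] at hkey
        calc (((a+b):ℝ)^2) ^ (p/2 : ℝ)
            ≤ ((‖C i x.fst‖^2 + ‖B i x.snd‖^2 : ℝ)) ^ (p/2 : ℝ) :=
              Real.rpow_le_rpow (by positivity) hE (by positivity)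
          _ ≤ _ := hkey
      have k2 : (((a+b):ℝ)^2) ^ (p/2 : ℝ) ≤
          RCLike.re (inner ℂ (cfc (fun t : ℝ => t ^ p)
              (absOp (ContinuousLinearMap.adjoint (B i))) x.fst) x.fst : ℂ)
            + RCLike.re (inner ℂ (cfc (fun t : ℝ => t ^ p)
              (absOp (ContinuousLinearMap.adjoint (C i))) x.snd) x.snd : ℂ) := by
        have hkey := wp_aux_key2
          (wp_aux_adjoint_comp_self_nonneg (ContinuousLinearMap.adjoint (B i)))
          (wp_aux_adjoint_comp_self_nonneg (ContinuousLinearMap.adjoint (C i))) hp1 hc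
        rw [← wp_aux_norm_sq_eq_re_inner, ← wp_aux_norm_sq_eq_re_inner] at hkey
        rw [← wp_aux_cfc_rpow_absOp (ContinuousLinearMap.adjoint (B i)) hp1',
          ← wp_aux_cfc_rpow_absOp (ContinuousLinearMap.adjoint (C i)) hp1'] at hkey
        calc (((a+b):ℝ)^2) ^ (p/2 : ℝ)
            ≤ ((‖ContinuousLinearMap.adjoint (B i) x.fst‖^2
                + ‖ContinuousLinearMap.adjoint (C i) x.snd‖^2 : ℝ)) ^ (p/2 : ℝ) :=
              Real.rpow_le_rpow (by positivity) hE' (by positivity)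
          _ ≤ _ := hkey
      have m1 := le_trans hpow k1
      have m2 := le_trans hpow k2
      nlinarith [mul_nonneg hα0 (sub_nonneg.2 m1), mul_nonneg hα1' (sub_nonneg.2 m2)]
    calc (∑ i, ‖(inner ℂ ((blockOp 0 (B i) (C i) 0) x) x : ℂ)‖ ^ p)
        ≤ ∑ i, (α * (RCLike.re (inner ℂ (cfc (fun t : ℝ => t ^ p) (absOp (C i)) x.fst) x.fst : ℂ)
                + RCLike.re (inner ℂ (cfc (fun t : ℝ => t ^ p) (absOp (B i)) x.snd) x.snd : ℂ))
          + (1-α) * (RCLike.re (inner ℂ (cfc (fun t : ℝ => t ^ p)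
                  (absOp (ContinuousLinearMap.adjoint (B i))) x.fst) x.fst : ℂ)
                + RCLike.re (inner ℂ (cfc (fun t : ℝ => t ^ p)
                  (absOp (ContinuousLinearMap.adjoint (C i))) x.snd) x.snd : ℂ))) :=
          Finset.sum_le_sum fun i _ => per i
      _ = RCLike.re (inner ℂ (R₁ x.fst) x.fst : ℂ) + RCLike.re (inner ℂ (R₂ x.snd) x.snd : ℂ) := by
          rw [hR₁, hR₂, wp_aux_re_inner_sum_combo, wp_aux_re_inner_sum_combo,
            ← Finset.sum_add_distrib]
          apply Finset.sum_congr rfl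
          intro i _
          ring
      _ ≤ ‖R₁‖ * ‖x.fst‖^2 + ‖R₂‖ * ‖x.snd‖^2 :=
          add_le_add (wp_aux_re_inner_le_norm_op _ _) (wp_aux_re_inner_le_norm_op _ _)
      _ ≤ M * ‖x.fst‖^2 + M * ‖x.snd‖^2 := by
          apply add_le_add
          · exact mul_le_mul_of_nonneg_right (le_max_left _ _) (by positivity)
          · exact mul_le_mul_of_nonneg_right (le_max_right _ _) (by positivity)
      _ = M := by rw [← mul_add, hc, mul_one]
  -- conclude via the sSup
  have hsupnn : 0 ≤ wpRad (fun i => blockOp 0 (B i) (C i) 0) p := by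
    apply Real.sSup_nonneg
    rintro r ⟨x, hx, rfl⟩
    positivity
  have hsup : wpRad (fun i => blockOp 0 (B i) (C i) 0) p ≤ M ^ (1/p : ℝ) := by
    apply Real.sSup_le
    · rintro r ⟨x, hx, rfl⟩
      exact Real.rpow_le_rpow (by positivity) (hmain x hx) (by positivity)
    · positivity
  calc wpRad (fun i => blockOp 0 (B i) (C i) 0) p ^ p
      ≤ (M ^ (1/p : ℝ)) ^ p := Real.rpow_le_rpow hsupnn hsup hp0.le
    _ = M := by
        rw [← Real.rpow_mul hM0, one_div, inv_mul_cancel₀ (ne_of_gt hp0), Real.rpow_one]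
end
end

section
/- Let T = [[A, 0], [0, D]] be a block-diagonal operator on H₁ ⊕ H₂ and r ≥ 1. Then w(T)^r ≤ (1/2) max{ ‖ |A|^r + |A*|^r ‖, ‖ |D|^r + |D*|^r ‖ }. -/
noncomputable section
open ContinuousLinearMap

variable {H₁ H₂ : Type*} [NormedAddCommGroup H₁] [InnerProductSpace ℂ H₁] [CompleteSpace H₁]
  [NormedAddCommGroup H₂] [InnerProductSpace ℂ H₂] [CompleteSpace H₂]

set_option synthInstance.maxHeartbeats 1000000
set_option maxHeartbeats 2000000

namespace NumRadiusAux

open Polynomial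

/-- Tangent line inequality for `t ^ r`, `r ≥ 1`, at `s > 0`. -/
lemma tangent_rpow {s t r : ℝ} (hs : 0 < s) (ht : 0 ≤ t) (hr : 1 ≤ r) :
    s ^ r + r * s ^ (r - 1) * (t - s) ≤ t ^ r := by
  have hu : (-1 : ℝ) ≤ t / s - 1 := by
    have : 0 ≤ t / s := div_nonneg ht hs.le
    linarith
  have hB := one_add_mul_self_le_rpow_one_add hu hr
  rw [add_sub_cancel] at hB
  have hsr : (0:ℝ) < s ^ r := Real.rpow_pos_of_pos hs r
  have hdiv : (t / s) ^ r = t ^ r / s ^ r := Real.div_rpow ht hs.le r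
  rw [hdiv] at hB
  have hmul := mul_le_mul_of_nonneg_left hB hsr.le
  rw [mul_div_cancel₀ _ hsr.ne'] at hmul
  have h1 : s ^ (r - 1) = s ^ r / s := Real.rpow_sub_one hs.ne' r
  rw [h1]
  calc s ^ r + r * (s ^ r / s) * (t - s)
      = s ^ r * (1 + r * (t / s - 1)) := by field_simp
    _ ≤ t ^ r := hmul

lemma midpoint_rpow {p q r : ℝ} (hp : 0 ≤ p) (hq : 0 ≤ q) (hr : 1 ≤ r) :
    ((p + q) / 2) ^ r ≤ (p ^ r + q ^ r) / 2 := by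
  rcases eq_or_lt_of_le (by positivity : (0:ℝ) ≤ (p + q) / 2) with h | h
  · have hp0 : p = 0 := by linarith
    have hq0 : q = 0 := by linarith
    subst hp0; subst hq0
    simp only [add_zero, zero_div]
    rw [Real.zero_rpow (by linarith : r ≠ 0)]
    simp
  · set s := (p + q) / 2 with hsdef
    have h1 := tangent_rpow h hp hr
    have h2 := tangent_rpow h hq hr
    have hsum : r * s ^ (r-1) * (p - s) + r * s ^ (r-1) * (q - s) = 0 := by
      rw [hsdef]; ring
    linarith

variable {H : Type*} [NormedAddCommGroup H] [InnerProductSpace ℂ H] [CompleteSpace H]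

lemma re_inner_le_of_le {S T : H →L[ℂ] H} (h : S ≤ T) (x : H) :
    RCLike.re (inner ℂ (S x) x : ℂ) ≤ RCLike.re (inner ℂ (T x) x : ℂ) := by
  have h2 := (ContinuousLinearMap.le_def S T |>.mp h).2 x
  simp only [ContinuousLinearMap.reApplyInnerSelf, ContinuousLinearMap.sub_apply,
    inner_sub_left, map_sub] at h2
  linarith

lemma re_inner_nonneg {T : H →L[ℂ] H} (h : 0 ≤ T) (x : H) :
    0 ≤ RCLike.re (inner ℂ (T x) x : ℂ) := by
  simpa using re_inner_le_of_le h x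

lemma inner_algebraMap_re (x : H) (c : ℝ) :
    RCLike.re (inner ℂ ((algebraMap ℝ (H →L[ℂ] H) c) x) x : ℂ) = c * ‖x‖ ^ 2 := by
  rw [Algebra.algebraMap_eq_smul_one]
  rw [ContinuousLinearMap.smul_apply, ContinuousLinearMap.one_apply]
  rw [show (c • x) = ((c:ℂ)) • x by rw [Complex.coe_smul]]
  rw [inner_smul_left]
  simp only [Complex.conj_ofReal]
  have h2 : RCLike.re ((c:ℂ) * (inner ℂ x x : ℂ)) = c * RCLike.re (inner ℂ x x : ℂ) := by
    simp [RCLike.re_to_complex]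
  rw [h2, inner_self_eq_norm_sq (𝕜 := ℂ)]

lemma absOp_eq (A : H →L[ℂ] H) : absOp A = cfc Real.sqrt (star A * A) := by
  have ha : (0:H →L[ℂ] H) ≤ star A * A := star_mul_self_nonneg A
  have hsa : IsSelfAdjoint (star A * A) := IsSelfAdjoint.star_mul_self A
  have hmul : cfc Real.sqrt (star A * A) * cfc Real.sqrt (star A * A) = star A * A := by
    rw [← cfc_mul _ _ _ (Real.continuous_sqrt.continuousOn) (Real.continuous_sqrt.continuousOn)]
    rw [cfc_congr (g := fun t : ℝ => t)
      (fun t ht => Real.mul_self_sqrt (spectrum_nonneg_of_nonneg ha ht))]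
    exact cfc_id' ℝ _ hsa
  have hb : (0:H →L[ℂ] H) ≤ cfc Real.sqrt (star A * A) :=
    cfc_nonneg fun t _ => Real.sqrt_nonneg t
  have habs : absOp A = CFC.sqrt (star A * A) := rfl
  rw [habs, CFC.sqrt_eq_iff _ _ ha hb]
  exact hmul

lemma absOp_adjoint_eq (A : H →L[ℂ] H) :
    absOp (ContinuousLinearMap.adjoint A) = cfc Real.sqrt (A * star A) := by
  rw [absOp_eq, ContinuousLinearMap.star_eq_adjoint, ContinuousLinearMap.adjoint_adjoint,
    ← ContinuousLinearMap.star_eq_adjoint]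

lemma absOp_nonneg (A : H →L[ℂ] H) : (0:H →L[ℂ] H) ≤ absOp A := CFC.sqrt_nonneg _

lemma comm_pow (A : H →L[ℂ] H) (n : ℕ) :
    A * (star A * A) ^ n = (A * star A) ^ n * A := by
  induction n with
  | zero => simp
  | succ n ih =>
    rw [pow_succ, ← mul_assoc, ih, pow_succ]
    simp only [mul_assoc]

lemma comm_aeval (A : H →L[ℂ] H) (p : Polynomial ℝ) :
    A * (aeval (star A * A) p) = (aeval (A * star A) p) * A := by
  induction p using Polynomial.induction_on' with
  | add p q hp hq => rw [map_add, map_add, mul_add, add_mul, hp, hq]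
  | monomial n c =>
    rw [aeval_monomial, aeval_monomial]
    rw [show (algebraMap ℝ (H →L[ℂ] H)) c = c • 1 from Algebra.algebraMap_eq_smul_one c]
    rw [smul_one_mul, smul_one_mul, mul_smul_comm, smul_mul_assoc, comm_pow]

lemma spec_subset_Icc {B : H →L[ℂ] H} [Nontrivial H] (hB : 0 ≤ B) {M : ℝ} (hM : ‖B‖ ≤ M) :
    spectrum ℝ B ⊆ Set.Icc 0 M := by
  intro t ht
  refine ⟨spectrum_nonneg_of_nonneg hB ht, ?_⟩
  have := spectrum.norm_le_norm_of_mem ht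
  rw [Real.norm_eq_abs] at this
  have := le_abs_self t
  linarith

lemma comm_cfc (A : H →L[ℂ] H) [Nontrivial H] {f : ℝ → ℝ} {M : ℝ}
    (hf : ContinuousOn f (Set.Icc 0 M))
    (ha : spectrum ℝ (star A * A) ⊆ Set.Icc 0 M)
    (hb : spectrum ℝ (A * star A) ⊆ Set.Icc 0 M) :
    A * cfc f (star A * A) = cfc f (A * star A) * A := by
  have hsa : IsSelfAdjoint (star A * A) := IsSelfAdjoint.star_mul_self A
  have hsb : IsSelfAdjoint (A * star A) := by
    simpa using IsSelfAdjoint.star_mul_self (star A)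
  have hfa : ContinuousOn f (spectrum ℝ (star A * A)) := hf.mono ha
  have hfb : ContinuousOn f (spectrum ℝ (A * star A)) := hf.mono hb
  have key : ∀ δ > (0:ℝ), ‖A * cfc f (star A * A) - cfc f (A * star A) * A‖ ≤ δ := by
    intro δ hδ
    set C : ℝ := 2 * ‖A‖ + 1 with hC
    have hCpos : 0 < C := by positivity
    obtain ⟨p, hp⟩ := exists_polynomial_near_of_continuousOn 0 M f hf (δ / C)
      (by positivity)
    have hpa : cfc (fun t => p.eval t) (star A * A) = aeval (star A * A) p :=
      cfc_polynomial p _ hsa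
    have hpb : cfc (fun t => p.eval t) (A * star A) = aeval (A * star A) p :=
      cfc_polynomial p _ hsb
    have hna : ‖cfc f (star A * A) - aeval (star A * A) p‖ ≤ δ / C := by
      rw [← hpa, ← cfc_sub f (fun t => p.eval t) _ hfa (by fun_prop)]
      refine norm_cfc_le (by positivity) fun t ht => ?_
      have := hp t (ha ht)
      rw [Real.norm_eq_abs, abs_sub_comm]
      linarith [abs_sub_comm (p.eval t) (f t)]
    have hnb : ‖cfc f (A * star A) - aeval (A * star A) p‖ ≤ δ / C := by
      rw [← hpb, ← cfc_sub f (fun t => p.eval t) _ hfb (by fun_prop)]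
      refine norm_cfc_le (by positivity) fun t ht => ?_
      have := hp t (hb ht)
      rw [Real.norm_eq_abs, abs_sub_comm]
      linarith [abs_sub_comm (p.eval t) (f t)]
    have hsplit : A * cfc f (star A * A) - cfc f (A * star A) * A
        = A * (cfc f (star A * A) - aeval (star A * A) p)
          - (cfc f (A * star A) - aeval (A * star A) p) * A := by
      rw [mul_sub, sub_mul, comm_aeval]
      abel
    rw [hsplit]
    calc ‖A * (cfc f (star A * A) - aeval (star A * A) p)
          - (cfc f (A * star A) - aeval (A * star A) p) * A‖
        ≤ ‖A * (cfc f (star A * A) - aeval (star A * A) p)‖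
          + ‖(cfc f (A * star A) - aeval (A * star A) p) * A‖ := norm_sub_le _ _
      _ ≤ ‖A‖ * (δ / C) + (δ / C) * ‖A‖ := by
          gcongr
          · exact (norm_mul_le _ _).trans (by gcongr)
          · exact (norm_mul_le _ _).trans (by gcongr)
      _ ≤ δ := by
          rw [hC]
          rw [div_eq_mul_inv]
          have h1 : ‖A‖ * (δ * (2 * ‖A‖ + 1)⁻¹) + δ * (2 * ‖A‖ + 1)⁻¹ * ‖A‖
              = δ * (2 * ‖A‖) * (2 * ‖A‖ + 1)⁻¹ := by ring
          rw [h1]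
          rw [mul_assoc]
          nth_rewrite 2 [show δ = δ * 1 by ring]
          gcongr
          rw [mul_inv_le_iff₀ (by positivity)]
          nlinarith [norm_nonneg A]
  have : ‖A * cfc f (star A * A) - cfc f (A * star A) * A‖ ≤ 0 := by
    by_contra hcon
    push_neg at hcon
    have := key (‖A * cfc f (star A * A) - cfc f (A * star A) * A‖ / 2) (by linarith)
    linarith
  rw [← sub_eq_zero]
  exact norm_le_zero_iff.mp this


lemma kato (A : H →L[ℂ] H) (x : H) (hx : ‖x‖ = 1) :
    ‖(inner ℂ (A x) x : ℂ)‖ ^ 2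
      ≤ RCLike.re (inner ℂ (absOp A x) x : ℂ)
        * RCLike.re (inner ℂ (absOp (ContinuousLinearMap.adjoint A) x) x : ℂ) := by
  have hHnt : Nontrivial H := by
    refine nontrivial_of_ne x 0 fun h => ?_
    rw [h, norm_zero] at hx; exact one_ne_zero hx.symm
  set a := star A * A with hadef
  set b := A * star A with hbdef
  have ha0 : (0:H →L[ℂ] H) ≤ a := star_mul_self_nonneg A
  have hb0 : (0:H →L[ℂ] H) ≤ b := mul_star_self_nonneg A
  have hsa : IsSelfAdjoint a := IsSelfAdjoint.star_mul_self A
  have hsb : IsSelfAdjoint b := IsSelfAdjoint.mul_star_self A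
  set M : ℝ := max ‖a‖ ‖b‖ with hMdef
  have hspa : spectrum ℝ a ⊆ Set.Icc 0 M := spec_subset_Icc ha0 (le_max_left _ _)
  have hspb : spectrum ℝ b ⊆ Set.Icc 0 M := spec_subset_Icc hb0 (le_max_right _ _)
  have hspa0 : ∀ t ∈ spectrum ℝ a, 0 ≤ t := fun t ht => (hspa ht).1
  have hspb0 : ∀ t ∈ spectrum ℝ b, 0 ≤ t := fun t ht => (hspb ht).1
  set p : ℝ := RCLike.re (inner ℂ (absOp A x) x : ℂ) with hpdef
  set q : ℝ := RCLike.re (inner ℂ (absOp (ContinuousLinearMap.adjoint A) x) x : ℂ) with hqdef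
  have hp0 : 0 ≤ p := re_inner_nonneg (absOp_nonneg A) x
  have hq0 : 0 ≤ q := re_inner_nonneg (absOp_nonneg _) x
  have hpeq : absOp A = cfc Real.sqrt a := absOp_eq A
  have hqeq : absOp (ContinuousLinearMap.adjoint A) = cfc Real.sqrt b := absOp_adjoint_eq A
  -- main ε-step
  have main : ∀ ε : ℝ, 0 < ε → ‖(inner ℂ (A x) x : ℂ)‖ ^ 2 ≤ (p + Real.sqrt ε) * q := by
    intro ε hε
    set f₁ : ℝ → ℝ := fun t => Real.sqrt (Real.sqrt (t + ε)) with hf₁def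
    set f₂ : ℝ → ℝ := fun t => (f₁ t)⁻¹ with hf₂def
    have hf₁c : Continuous f₁ := by
      exact Real.continuous_sqrt.comp (Real.continuous_sqrt.comp (by continuity))
    have hf₁pos : ∀ t : ℝ, 0 ≤ t → 0 < f₁ t := fun t ht =>
      Real.sqrt_pos.mpr (Real.sqrt_pos.mpr (by linarith))
    have hf₂c : ContinuousOn f₂ (Set.Ici 0) := by
      intro t ht
      exact ((hf₁c.continuousAt).inv₀ (hf₁pos t ht).ne').continuousWithinAt
    have hsub_a : Set.Ici (0:ℝ) ⊇ spectrum ℝ a := fun t ht => hspa0 t ht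
    have hsub_b : Set.Ici (0:ℝ) ⊇ spectrum ℝ b := fun t ht => hspb0 t ht
    set Q : H →L[ℂ] H := cfc f₁ a with hQdef
    set R : H →L[ℂ] H := cfc f₂ a with hRdef
    have hf₁a : ContinuousOn f₁ (spectrum ℝ a) := hf₁c.continuousOn
    have hf₂a : ContinuousOn f₂ (spectrum ℝ a) := hf₂c.mono hsub_a
    have hQsa : IsSelfAdjoint Q := cfc_predicate f₁ a
    have hRsa : IsSelfAdjoint R := cfc_predicate f₂ a
    have hRQ : R * Q = 1 := by
      rw [hRdef, hQdef, ← cfc_mul _ _ _ hf₂a hf₁a]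
      rw [cfc_congr (g := fun _ => (1:ℝ))
        (fun t ht => inv_mul_cancel₀ (hf₁pos t (hspa0 t ht)).ne')]
      rw [cfc_const (1:ℝ) a hsa, map_one]
    -- step 1 : ⟪Ax,x⟫ = ⟪Q x, R (A† x)⟫
    have hstep1 : (inner ℂ (A x) x : ℂ) = inner ℂ (Q x) (R ((ContinuousLinearMap.adjoint A) x)) := by
      have hx1 : R (Q x) = x := by
        rw [← ContinuousLinearMap.mul_apply, hRQ, ContinuousLinearMap.one_apply]
      have hadj : ContinuousLinearMap.adjoint (A * R)
          = R * ContinuousLinearMap.adjoint A := by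
        rw [← ContinuousLinearMap.star_eq_adjoint, ← ContinuousLinearMap.star_eq_adjoint,
          star_mul, hRsa.star_eq]
      calc (inner ℂ (A x) x : ℂ) = inner ℂ ((A * R) (Q x)) x := by
            rw [ContinuousLinearMap.mul_apply, hx1]
        _ = inner ℂ (Q x) (ContinuousLinearMap.adjoint (A * R) x) :=
            (ContinuousLinearMap.adjoint_inner_right _ _ _).symm
        _ = inner ℂ (Q x) (R ((ContinuousLinearMap.adjoint A) x)) := by
            rw [hadj, ContinuousLinearMap.mul_apply]
    have hCS : ‖(inner ℂ (A x) x : ℂ)‖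
        ≤ ‖Q x‖ * ‖R ((ContinuousLinearMap.adjoint A) x)‖ := by
      rw [hstep1]; exact norm_inner_le_norm _ _
    -- bound 1 : ‖Q x‖² ≤ p + √ε
    have hQx : ‖Q x‖ ^ 2 ≤ p + Real.sqrt ε := by
      have h1 : (inner ℂ ((Q * Q) x) x : ℂ) = inner ℂ (Q x) (Q x) := by
        rw [ContinuousLinearMap.mul_apply, ← hQsa.adjoint_eq,
          ContinuousLinearMap.adjoint_inner_left]
        rw [hQsa.adjoint_eq]
      have h2 : ‖Q x‖ ^ 2 = RCLike.re (inner ℂ ((Q * Q) x) x : ℂ) := by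
        rw [h1, inner_self_eq_norm_sq (𝕜 := ℂ)]
      have hQQ : Q * Q = cfc (fun t => Real.sqrt (t + ε)) a := by
        rw [hQdef, ← cfc_mul _ _ _ hf₁a hf₁a]
        exact cfc_congr fun t ht => Real.mul_self_sqrt (Real.sqrt_nonneg _)
      have hle : cfc (fun t => Real.sqrt (t + ε)) a
          ≤ cfc (fun t => Real.sqrt t + Real.sqrt ε) a := by
        refine cfc_mono (fun t ht => ?_) (by fun_prop) (by fun_prop)
        have ht0 : 0 ≤ t := hspa0 t ht
        have : t + ε ≤ (Real.sqrt t + Real.sqrt ε) ^ 2 := by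
          have h3 : (Real.sqrt t + Real.sqrt ε) ^ 2
              = t + ε + 2 * Real.sqrt t * Real.sqrt ε := by
            have := Real.sq_sqrt ht0
            have := Real.sq_sqrt hε.le
            nlinarith [Real.sqrt_nonneg t, Real.sqrt_nonneg ε]
          nlinarith [Real.sqrt_nonneg t, Real.sqrt_nonneg ε]
        calc Real.sqrt (t + ε) ≤ Real.sqrt ((Real.sqrt t + Real.sqrt ε) ^ 2) :=
              Real.sqrt_le_sqrt this
          _ = Real.sqrt t + Real.sqrt ε := Real.sqrt_sq (by positivity)
      have hsplit : cfc (fun t => Real.sqrt t + Real.sqrt ε) a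
          = cfc Real.sqrt a + algebraMap ℝ (H →L[ℂ] H) (Real.sqrt ε) := by
        rw [cfc_add _ _ _ (by fun_prop) (by fun_prop), cfc_const _ _ hsa]
      have := re_inner_le_of_le (hQQ ▸ hle) x
      rw [h2]
      refine this.trans ?_
      rw [hsplit, ContinuousLinearMap.add_apply, inner_add_left, map_add,
        inner_algebraMap_re, hx]
      rw [hpeq] at hpdef
      rw [hpdef]; ring_nf; simp
    -- bound 2 : ‖R (A† x)‖² ≤ q
    have hRx : ‖R ((ContinuousLinearMap.adjoint A) x)‖ ^ 2 ≤ q := by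
      set y := (ContinuousLinearMap.adjoint A) x with hydef
      have h1 : (inner ℂ ((R * R) y) y : ℂ) = inner ℂ (R y) (R y) := by
        rw [ContinuousLinearMap.mul_apply, ← hRsa.adjoint_eq,
          ContinuousLinearMap.adjoint_inner_left, hRsa.adjoint_eq]
      have h2 : ‖R y‖ ^ 2 = RCLike.re (inner ℂ ((R * R) y) y : ℂ) := by
        rw [h1, inner_self_eq_norm_sq (𝕜 := ℂ)]
      set g : ℝ → ℝ := fun t => (Real.sqrt (t + ε))⁻¹ with hgdef
      have hgc : ContinuousOn g (Set.Icc 0 M) := by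
        intro t ht
        have : (0:ℝ) < t + ε := by have := ht.1; linarith
        have hc : Continuous fun s : ℝ => Real.sqrt (s + ε) :=
          Real.continuous_sqrt.comp (continuous_id.add continuous_const)
        exact (hc.continuousAt.inv₀ (Real.sqrt_pos.mpr this).ne').continuousWithinAt
      have hRR : R * R = cfc g a := by
        rw [hRdef, ← cfc_mul _ _ _ hf₂a hf₂a]
        refine cfc_congr fun t ht => ?_
        rw [hf₂def]
        simp only
        rw [← mul_inv]
        rw [Real.mul_self_sqrt (Real.sqrt_nonneg _)]
      have hcomm : A * cfc g a = cfc g b * A := comm_cfc A hgc hspa hspb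
      have h3 : (inner ℂ ((R * R) y) y : ℂ)
          = inner ℂ ((cfc g b * b) x) x := by
        have e1 : (inner ℂ ((R * R) y) y : ℂ) = inner ℂ (A ((R * R) y)) x := by
          nth_rewrite 2 [hydef]
          exact ContinuousLinearMap.adjoint_inner_right A _ x
        have e2 : A ((R * R) y) = (cfc g b * b) x := by
          have e3 : A ((R * R) y)
              = ((A * cfc g a) * ContinuousLinearMap.adjoint A) x := by
            rw [hydef, ← hRR]
            simp only [ContinuousLinearMap.mul_apply]
          rw [e3, hcomm, mul_assoc]
          have e4 : A * ContinuousLinearMap.adjoint A = b := by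
            rw [← ContinuousLinearMap.star_eq_adjoint, ← hbdef]
          rw [e4]
        rw [e1, e2]
      have hle2 : cfc g b * b ≤ cfc Real.sqrt b := by
        have hid : cfc g b * b = cfc (fun t => g t * t) b := by
          nth_rewrite 2 [← cfc_id' ℝ b hsb]
          rw [← cfc_mul _ _ _ (hgc.mono hspb) (by fun_prop)]
        rw [hid]
        refine cfc_mono (fun t ht => ?_) ((hgc.mono hspb).mul (by fun_prop)) (by fun_prop)
        have ht0 : 0 ≤ t := hspb0 t ht
        rcases eq_or_lt_of_le ht0 with h | h
        · rw [hgdef]; simp only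
          rw [← h]; simp
        · rw [hgdef]; simp only
          rw [inv_mul_eq_div]
          calc t / Real.sqrt (t + ε) ≤ t / Real.sqrt t := by
                gcongr
                <;> first
                  | exact Real.sqrt_pos.mpr h
                  | linarith
            _ = Real.sqrt t := Real.div_sqrt
      rw [h2, h3]
      have := re_inner_le_of_le hle2 x
      refine this.trans ?_
      rw [hqeq] at hqdef
      rw [hqdef]
    -- combine
    have hQx0 : 0 ≤ ‖Q x‖ := norm_nonneg _
    have hRx0 : 0 ≤ ‖R ((ContinuousLinearMap.adjoint A) x)‖ := norm_nonneg _
    calc ‖(inner ℂ (A x) x : ℂ)‖ ^ 2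
        ≤ (‖Q x‖ * ‖R ((ContinuousLinearMap.adjoint A) x)‖) ^ 2 := by
          have := hCS
          have h0 : 0 ≤ ‖(inner ℂ (A x) x : ℂ)‖ := norm_nonneg _
          nlinarith
      _ = ‖Q x‖ ^ 2 * ‖R ((ContinuousLinearMap.adjoint A) x)‖ ^ 2 := by ring
      _ ≤ (p + Real.sqrt ε) * q := by
          have h4 : 0 ≤ ‖R ((ContinuousLinearMap.adjoint A) x)‖ ^ 2 := by positivity
          have h5 : 0 ≤ p + Real.sqrt ε := by positivity
          exact mul_le_mul hQx (by exact hRx) h4 h5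
  -- take ε → 0
  refine le_of_forall_pos_le_add fun δ hδ => ?_
  have hε : (0:ℝ) < (δ / (q + 1)) ^ 2 := by positivity
  have h6 := main _ hε
  have h7 : Real.sqrt ((δ / (q + 1)) ^ 2) = δ / (q + 1) := Real.sqrt_sq (by positivity)
  rw [h7] at h6
  have h8 : (p + δ / (q + 1)) * q = p * q + δ * (q / (q + 1)) := by ring
  rw [h8] at h6
  have h9 : q / (q + 1) ≤ 1 := by
    rw [div_le_one (by linarith)]; linarith
  nlinarith


lemma mccarthy (B : H →L[ℂ] H) (hB : (0:H →L[ℂ] H) ≤ B) {r : ℝ} (hr : 1 ≤ r)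
    (x : H) (hx : ‖x‖ = 1) :
    (RCLike.re (inner ℂ (B x) x : ℂ)) ^ r
      ≤ RCLike.re (inner ℂ (cfc (fun t : ℝ => t ^ r) B x) x : ℂ) := by
  have hsB : IsSelfAdjoint B := IsSelfAdjoint.of_nonneg hB
  have hrc : ContinuousOn (fun t : ℝ => t ^ r) (spectrum ℝ B) := fun t _ =>
    (Real.continuousAt_rpow_const t r (Or.inr (by linarith))).continuousWithinAt
  have hnn : (0:H →L[ℂ] H) ≤ cfc (fun t : ℝ => t ^ r) B :=
    cfc_nonneg fun t ht => Real.rpow_nonneg (spectrum_nonneg_of_nonneg hB ht) r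
  set s := RCLike.re (inner ℂ (B x) x : ℂ) with hsdef
  have hs0 : 0 ≤ s := re_inner_nonneg hB x
  rcases eq_or_lt_of_le hs0 with h | h
  · rw [← h, Real.zero_rpow (by linarith : r ≠ 0)]
    exact re_inner_nonneg hnn x
  · set c₂ : ℝ := r * s ^ (r - 1) with hc₂def
    set c₁ : ℝ := s ^ r - c₂ * s with hc₁def
    have hpt : ∀ t ∈ spectrum ℝ B, c₁ + c₂ * t ≤ t ^ r := by
      intro t ht
      have htan := tangent_rpow h (spectrum_nonneg_of_nonneg hB ht) hr
      have hring : c₂ * (t - s) = c₂ * t - c₂ * s := by ring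
      rw [hc₁def]
      rw [hc₂def] at hring ⊢
      linarith [htan, hring]
    have hcfc : cfc (fun t : ℝ => c₁ + c₂ * t) B ≤ cfc (fun t : ℝ => t ^ r) B :=
      cfc_mono hpt (by fun_prop) hrc
    have haff : cfc (fun t : ℝ => c₁ + c₂ * t) B
        = algebraMap ℝ (H →L[ℂ] H) c₁ + c₂ • B := by
      rw [cfc_add _ _ _ (by fun_prop) (by fun_prop), cfc_const _ _ hsB,
        cfc_const_mul _ _ _ (by fun_prop), cfc_id' ℝ B hsB]
    have hre := re_inner_le_of_le hcfc x
    rw [haff, ContinuousLinearMap.add_apply, inner_add_left, map_add,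
      inner_algebraMap_re, hx] at hre
    have hsm : RCLike.re (inner ℂ ((c₂ • B) x) x : ℂ) = c₂ * s := by
      rw [ContinuousLinearMap.smul_apply]
      rw [show (c₂ • (B x)) = ((c₂:ℂ)) • (B x) by rw [Complex.coe_smul]]
      rw [inner_smul_left]
      simp only [Complex.conj_ofReal]
      have hmul : RCLike.re ((c₂:ℂ) * (inner ℂ (B x) x : ℂ))
          = c₂ * RCLike.re (inner ℂ (B x) x : ℂ) := by
        simp [RCLike.re_to_complex]
      rw [hmul]
    rw [hsm] at hre
    have hfin : c₁ * 1 ^ 2 + c₂ * s = s ^ r := by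
      rw [hc₁def]; ring
    linarith [hre]

lemma key_unit (A : H →L[ℂ] H) {r : ℝ} (hr : 1 ≤ r) (x : H) (hx : ‖x‖ = 1) :
    ‖(inner ℂ (A x) x : ℂ)‖ ^ r
      ≤ (1/2) * ‖cfc (fun t : ℝ => t ^ r) (absOp A)
          + cfc (fun t : ℝ => t ^ r) (absOp (ContinuousLinearMap.adjoint A))‖ := by
  set m := ‖(inner ℂ (A x) x : ℂ)‖ with hmdef
  have hm0 : 0 ≤ m := norm_nonneg _
  set p : ℝ := RCLike.re (inner ℂ (absOp A x) x : ℂ) with hpdef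
  set q : ℝ := RCLike.re (inner ℂ (absOp (ContinuousLinearMap.adjoint A) x) x : ℂ) with hqdef
  have hp0 : 0 ≤ p := re_inner_nonneg (absOp_nonneg A) x
  have hq0 : 0 ≤ q := re_inner_nonneg (absOp_nonneg _) x
  have hk : m ^ 2 ≤ p * q := kato A x hx
  have hm_le : m ≤ (p + q) / 2 := by nlinarith [sq_nonneg (p - q), sq_nonneg (m - (p+q)/2)]
  have hrpow : m ^ r ≤ ((p + q) / 2) ^ r := Real.rpow_le_rpow hm0 hm_le (by linarith)
  have hmid := midpoint_rpow hp0 hq0 hr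
  have hmc1 := mccarthy (absOp A) (absOp_nonneg A) hr x hx
  have hmc2 := mccarthy (absOp (ContinuousLinearMap.adjoint A)) (absOp_nonneg _) hr x hx
  set N : H →L[ℂ] H := cfc (fun t : ℝ => t ^ r) (absOp A)
      + cfc (fun t : ℝ => t ^ r) (absOp (ContinuousLinearMap.adjoint A)) with hNdef
  have hNre : RCLike.re (inner ℂ (N x) x : ℂ)
      = RCLike.re (inner ℂ (cfc (fun t : ℝ => t ^ r) (absOp A) x) x : ℂ)
        + RCLike.re (inner ℂ (cfc (fun t : ℝ => t ^ r)
            (absOp (ContinuousLinearMap.adjoint A)) x) x : ℂ) := by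
    rw [hNdef, ContinuousLinearMap.add_apply, inner_add_left, map_add]
  have hNnorm : RCLike.re (inner ℂ (N x) x : ℂ) ≤ ‖N‖ := by
    calc RCLike.re (inner ℂ (N x) x : ℂ) ≤ ‖(inner ℂ (N x) x : ℂ)‖ := RCLike.re_le_norm _
      _ ≤ ‖N x‖ * ‖x‖ := norm_inner_le_norm _ _
      _ ≤ ‖N‖ * ‖x‖ * ‖x‖ := by gcongr; exact ContinuousLinearMap.le_opNorm N x
      _ = ‖N‖ := by rw [hx]; ring
  calc m ^ r ≤ ((p + q) / 2) ^ r := hrpow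
    _ ≤ (p ^ r + q ^ r) / 2 := hmid
    _ ≤ RCLike.re (inner ℂ (N x) x : ℂ) / 2 := by rw [hNre]; linarith
    _ ≤ (1/2) * ‖N‖ := by linarith


lemma key_scaled (A : H →L[ℂ] H) {r : ℝ} (hr : 1 ≤ r) (y : H) :
    ‖(inner ℂ (A y) y : ℂ)‖
      ≤ ‖y‖ ^ 2 * ((1/2) * ‖cfc (fun t : ℝ => t ^ r) (absOp A)
          + cfc (fun t : ℝ => t ^ r) (absOp (ContinuousLinearMap.adjoint A))‖) ^ r⁻¹ := by
  set K : ℝ := (1/2) * ‖cfc (fun t : ℝ => t ^ r) (absOp A)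
      + cfc (fun t : ℝ => t ^ r) (absOp (ContinuousLinearMap.adjoint A))‖ with hKdef
  have hK0 : 0 ≤ K := by positivity
  rcases eq_or_ne y 0 with h | h
  · subst h
    simp
  · have hy : 0 < ‖y‖ := norm_pos_iff.mpr h
    set u : H := ‖y‖⁻¹ • y with hudef
    have hu : ‖u‖ = 1 := norm_smul_inv_norm h
    have h1 := key_unit A hr u hu
    rw [← hKdef] at h1
    have hm0 : 0 ≤ ‖(inner ℂ (A u) u : ℂ)‖ := norm_nonneg _
    have h2 : ‖(inner ℂ (A u) u : ℂ)‖ ≤ K ^ r⁻¹ := by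
      have h3 : ‖(inner ℂ (A u) u : ℂ)‖ = (‖(inner ℂ (A u) u : ℂ)‖ ^ r) ^ r⁻¹ := by
        rw [← Real.rpow_mul hm0, mul_inv_cancel₀ (by linarith : r ≠ 0), Real.rpow_one]
      rw [h3]
      exact Real.rpow_le_rpow (Real.rpow_nonneg hm0 r) h1 (by positivity)
    have hyu : ‖y‖ • u = y := smul_inv_smul₀ hy.ne' y
    have h4 : ‖(inner ℂ (A y) y : ℂ)‖ = ‖y‖ ^ 2 * ‖(inner ℂ (A u) u : ℂ)‖ := by
      rw [← hyu]
      rw [show (‖y‖ • u) = ((‖y‖:ℂ)) • u by rw [Complex.coe_smul]]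
      rw [map_smul, inner_smul_left, inner_smul_right]
      rw [norm_mul, norm_mul, norm_smul, hu]
      simp only [RCLike.norm_conj, Complex.norm_real, abs_norm, norm_norm, mul_one]
      ring
    rw [h4]
    exact mul_le_mul_of_nonneg_left h2 (by positivity)

end NumRadiusAux

open NumRadiusAux


theorem numRadius_blockDiag_pow_le (A : H₁ →L[ℂ] H₁) (D : H₂ →L[ℂ] H₂)
    (r : ℝ) (hr : 1 ≤ r) :
    numRadius (blockOp A 0 0 D) ^ r ≤
      (1 / 2) * max
        ‖cfc (fun t : ℝ => t ^ r) (absOp A)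
          + cfc (fun t : ℝ => t ^ r) (absOp (ContinuousLinearMap.adjoint A))‖
        ‖cfc (fun t : ℝ => t ^ r) (absOp D)
          + cfc (fun t : ℝ => t ^ r) (absOp (ContinuousLinearMap.adjoint D))‖ := by
  classical
  set X₁ : ℝ := ‖cfc (fun t : ℝ => t ^ r) (absOp A)
      + cfc (fun t : ℝ => t ^ r) (absOp (ContinuousLinearMap.adjoint A))‖ with hX₁
  set X₂ : ℝ := ‖cfc (fun t : ℝ => t ^ r) (absOp D)
      + cfc (fun t : ℝ => t ^ r) (absOp (ContinuousLinearMap.adjoint D))‖ with hX₂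
  set K : ℝ := (1/2) * max X₁ X₂ with hKdef
  have hK0 : 0 ≤ K := by positivity
  have hc0 : 0 ≤ K ^ r⁻¹ := Real.rpow_nonneg hK0 _
  have hr0 : r ≠ 0 := by linarith
  have hbound : ∀ z ∈ {s : ℝ | ∃ x : WithLp 2 (H₁ × H₂), ‖x‖ = 1
      ∧ s = ‖(inner ℂ (blockOp A 0 0 D x) x : ℂ)‖}, z ≤ K ^ r⁻¹ := by
    rintro z ⟨x, hx, rfl⟩
    have hinner : (inner ℂ (blockOp A 0 0 D x) x : ℂ)
        = inner ℂ (A x.fst) x.fst + inner ℂ (D x.snd) x.snd := by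
      rw [WithLp.prod_inner_apply]
      simp [blockOp]
    have hK₁ : ((1/2) * X₁) ^ r⁻¹ ≤ K ^ r⁻¹ := by
      refine Real.rpow_le_rpow (by positivity) ?_ (by positivity)
      rw [hKdef]
      gcongr
      exact le_max_left _ _
    have hK₂ : ((1/2) * X₂) ^ r⁻¹ ≤ K ^ r⁻¹ := by
      refine Real.rpow_le_rpow (by positivity) ?_ (by positivity)
      rw [hKdef]
      gcongr
      exact le_max_right _ _
    calc ‖(inner ℂ (blockOp A 0 0 D x) x : ℂ)‖
        ≤ ‖(inner ℂ (A x.fst) x.fst : ℂ)‖ + ‖(inner ℂ (D x.snd) x.snd : ℂ)‖ := by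
          rw [hinner]; exact norm_add_le _ _
      _ ≤ ‖x.fst‖ ^ 2 * ((1/2) * X₁) ^ r⁻¹ + ‖x.snd‖ ^ 2 * ((1/2) * X₂) ^ r⁻¹ :=
          add_le_add (NumRadiusAux.key_scaled A hr x.fst) (NumRadiusAux.key_scaled D hr x.snd)
      _ ≤ ‖x.fst‖ ^ 2 * K ^ r⁻¹ + ‖x.snd‖ ^ 2 * K ^ r⁻¹ := by
          gcongr
      _ = (‖x.fst‖ ^ 2 + ‖x.snd‖ ^ 2) * K ^ r⁻¹ := by ring
      _ = K ^ r⁻¹ := by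
          rw [← WithLp.prod_norm_sq_eq_of_L2, hx]
          ring
  have hsup : numRadius (blockOp A 0 0 D) ≤ K ^ r⁻¹ := Real.sSup_le hbound hc0
  have hnr0 : 0 ≤ numRadius (blockOp A 0 0 D) := by
    apply Real.sSup_nonneg
    rintro z ⟨x, hx, rfl⟩
    exact norm_nonneg _
  calc numRadius (blockOp A 0 0 D) ^ r ≤ (K ^ r⁻¹) ^ r :=
        Real.rpow_le_rpow hnr0 hsup (by linarith)
    _ = K := by
        rw [← Real.rpow_mul hK0, inv_mul_cancel₀ hr0, Real.rpow_one]
end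
end
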